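/- arXiv:math/0112181 — 10 statements merged into one kernel-verified Lean document; each statement's English description precedes it below -/
import Mathlib

section
/- Let 1 ≤ p < ∞ and let T : ℓ^p → ℓ^p be a continuous linear operator. Then T is semi band preserving (for all f, g, if supp f ∩ supp(Tg) = ∅ then supp(Tf) ∩ supp(Tg) = ∅) if and only if T is a weighted conditional expectation operator; that is, if and only if there exist a countable index type J, nonzero elements (u_j)_{j∈J} of ℓ^p with pairwise disjoint supports, each u_j lying in the range of T, and nonzero continuous linear functionals (ψ_j)_{j∈J} on ℓ^p satisfying ψ_j f = 0 whenever supp f ∩ supp u_j = ∅, such that for every f ∈ ℓ^p the family (fun j => ψ_j(f) • u_j) has sum T f (HasSum). -/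
open scoped ENNReal


set_option linter.unusedSectionVars false
namespace SBP

variable (p : ℝ≥0∞) [Fact (1 ≤ p)]

lemma p_ne_zero : p ≠ 0 := (zero_lt_one.trans_le (Fact.out : 1 ≤ p)).ne'

/-- Evaluation at a coordinate, as a continuous linear functional on `ℓ^p`. -/
noncomputable def ev (k : ℕ) : lp (fun _ : ℕ => ℝ) p →L[ℝ] ℝ :=
  LinearMap.mkContinuous
    { toFun := fun f => f k
      map_add' := fun f g => by simp [lp.coeFn_add]
      map_smul' := fun c f => by simp [lp.coeFn_smul] }
    1 (fun f => by
      show ‖(f : ℕ → ℝ) k‖ ≤ 1 * ‖f‖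
      simpa using lp.norm_apply_le_norm (p_ne_zero p) f k)

@[simp] lemma ev_apply (k : ℕ) (f : lp (fun _ : ℕ => ℝ) p) : ev p k f = f k := rfl

/-- The `n`-th standard basis vector. -/
noncomputable def e (n : ℕ) : lp (fun _ : ℕ => ℝ) p := lp.single p n 1

lemma e_apply_self (n : ℕ) : e p n n = 1 := lp.single_apply_self p n 1

lemma e_apply_ne {m n : ℕ} (h : m ≠ n) : e p n m = 0 := lp.single_apply_ne p n 1 h

variable {p}

lemma single_eq_smul_e (n : ℕ) (c : ℝ) : lp.single p n c = c • e p n := by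
  rw [e, ← lp.single_smul, smul_eq_mul, mul_one]

lemma hasSum_T (hp : p ≠ ⊤) (T : lp (fun _ : ℕ => ℝ) p →L[ℝ] lp (fun _ : ℕ => ℝ) p)
    (f : lp (fun _ : ℕ => ℝ) p) :
    HasSum (fun n => f n • T (e p n)) (T f) := by
  have h := (lp.hasSum_single hp f).mapL T
  refine h.congr_fun fun n => ?_
  rw [single_eq_smul_e, map_smul]

lemma hasSum_coord (hp : p ≠ ⊤) (T : lp (fun _ : ℕ => ℝ) p →L[ℝ] lp (fun _ : ℕ => ℝ) p)
    (f : lp (fun _ : ℕ => ℝ) p) (k : ℕ) :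
    HasSum (fun n => f n * T (e p n) k) (T f k) := by
  have h := (hasSum_T hp T f).mapL (ev p k)
  refine h.congr_fun fun n => ?_
  rw [ev_apply, lp.coeFn_smul, Pi.smul_apply, smul_eq_mul]

lemma apply_ne_zero {f : lp (fun _ : ℕ => ℝ) p} {k : ℕ} (h : f k ≠ 0) : f ≠ 0 := by
  intro h0; apply h; rw [h0]; simp

end SBP

namespace SBP

variable {p : ℝ≥0∞} [Fact (1 ≤ p)]

lemma eq_zero_of_forall {x : lp (fun _ : ℕ => ℝ) p} (h : ∀ k, x k = 0) : x = 0 :=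
  lp.ext (by funext k; rw [h k, lp.coeFn_zero, Pi.zero_apply])

section Forward

variable {T : lp (fun _ : ℕ => ℝ) p →L[ℝ] lp (fun _ : ℕ => ℝ) p}
  (hT : ∀ f g : lp (fun _ : ℕ => ℝ) p,
      {n : ℕ | f n ≠ 0} ∩ {n : ℕ | T g n ≠ 0} = ∅ →
      {n : ℕ | T f n ≠ 0} ∩ {n : ℕ | T g n ≠ 0} = ∅)

include hT

lemma sbp_e (n : ℕ) (g : lp (fun _ : ℕ => ℝ) p) (hn : T g n = 0) :
    ∀ k, T (e p n) k ≠ 0 → T g k = 0 := by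
  intro k hk
  have hemp : {m : ℕ | e p n m ≠ 0} ∩ {m : ℕ | T g m ≠ 0} = ∅ := by
    rw [Set.eq_empty_iff_forall_notMem]
    rintro m ⟨h1, h2⟩
    rcases eq_or_ne m n with rfl | hmn
    · exact h2 hn
    · exact h1 (e_apply_ne p hmn)
  have h := hT (e p n) g hemp
  by_contra hgk
  exact Set.eq_empty_iff_forall_notMem.1 h k ⟨hk, hgk⟩

lemma diag {n : ℕ} (hn : T (e p n) ≠ 0) : T (e p n) n ≠ 0 := by
  by_contra h0
  exact hn (eq_zero_of_forall fun k => by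
    by_contra hk
    exact hk (sbp_e hT n (e p n) h0 k hk))

lemma mutual_mem {n m k : ℕ} (hnn : T (e p n) n ≠ 0) (hnk : T (e p n) k ≠ 0)
    (hmk : T (e p m) k ≠ 0) : T (e p m) n ≠ 0 := by
  intro h0
  exact hmk (sbp_e hT n (e p m) h0 k hnk)

omit hT in
lemma coord_sub_smul (x y : lp (fun _ : ℕ => ℝ) p) (c : ℝ) (k : ℕ) :
    ((x - c • y) : lp (fun _ : ℕ => ℝ) p) k = x k - c * y k := by
  rw [lp.coeFn_sub, Pi.sub_apply, lp.coeFn_smul, Pi.smul_apply, smul_eq_mul]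

lemma prop {n m : ℕ} (hnn : T (e p n) n ≠ 0) (hmn : T (e p m) n ≠ 0) :
    T (e p m) = (T (e p m) n / T (e p n) n) • T (e p n) := by
  have hmm : T (e p m) m ≠ 0 := diag hT (apply_ne_zero hmn)
  have hnm : T (e p n) m ≠ 0 := mutual_mem hT hmm hmn hnn
  set a := T (e p m) n with ha
  set b := T (e p n) n with hb
  set c := T (e p n) m / T (e p m) m with hc
  have hTg : ∀ k, T (e p m - (a / b) • e p n) k = T (e p m) k - (a / b) * T (e p n) k := by
    intro k; rw [map_sub, map_smul, coord_sub_smul]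
  have hTg' : ∀ k, T (e p n - c • e p m) k = T (e p n) k - c * T (e p m) k := by
    intro k; rw [map_sub, map_smul, coord_sub_smul]
  have hTgn : T (e p m - (a / b) • e p n) n = 0 := by
    rw [hTg, ← ha, ← hb]; field_simp; ring
  have hTg'm : T (e p n - c • e p m) m = 0 := by
    rw [hTg', hc]; field_simp; ring
  have C1 := sbp_e hT n _ hTgn
  have C2 := sbp_e hT m _ hTg'm
  have hzero : ∀ k, T (e p m - (a / b) • e p n) k = 0 := by
    intro k
    by_cases hnk : T (e p n) k = 0
    · rw [hTg, hnk, mul_zero, sub_zero]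
      by_contra hmk
      have h2 := C2 k hmk
      rw [hTg', hnk, zero_sub, neg_eq_zero] at h2
      rcases mul_eq_zero.1 h2 with hc0 | h
      · exact (div_ne_zero hnm hmm) hc0
      · exact hmk h
    · exact C1 k hnk
  have h0 : T (e p m) - (a / b) • T (e p n) = 0 := by
    have := eq_zero_of_forall hzero
    rwa [map_sub, map_smul] at this
  exact sub_eq_zero.1 h0

end Forward

end SBP

section Part2
namespace SBP

variable {p : ℝ≥0∞} [Fact (1 ≤ p)]

lemma single_zero (k : ℕ) : (lp.single p k (0 : ℝ) : lp (fun _ : ℕ => ℝ) p) = 0 :=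
  lp.ext (funext fun m => by
    rw [lp.single_apply]
    simp)

lemma smul_coord (c : ℝ) (x : lp (fun _ : ℕ => ℝ) p) (k : ℕ) :
    ((c • x) : lp (fun _ : ℕ => ℝ) p) k = c * x k := by
  rw [lp.coeFn_smul, Pi.smul_apply, smul_eq_mul]

/-- Index type: minimal representatives of the "bands" of `T`. -/
abbrev idx (T : lp (fun _ : ℕ => ℝ) p →L[ℝ] lp (fun _ : ℕ => ℝ) p) : Type :=
  {n : ℕ // T (e p n) n ≠ 0 ∧
    ∀ m, m < n → ¬(T (e p m) m ≠ 0 ∧ T (e p n) m ≠ 0)}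

section Forward2

variable {T : lp (fun _ : ℕ => ℝ) p →L[ℝ] lp (fun _ : ℕ => ℝ) p}
  (hT : ∀ f g : lp (fun _ : ℕ => ℝ) p,
      {n : ℕ | f n ≠ 0} ∩ {n : ℕ | T g n ≠ 0} = ∅ →
      {n : ℕ | T f n ≠ 0} ∩ {n : ℕ | T g n ≠ 0} = ∅)

include hT

lemma min_class (n : ℕ) (hn : T (e p n) n ≠ 0) :
    ∃ (j : idx T) (c : ℝ), c ≠ 0 ∧ T (e p n) = c • T (e p (j : ℕ)) := by
  classical
  have hex : ∃ m, T (e p m) m ≠ 0 ∧ T (e p n) m ≠ 0 := ⟨n, hn, hn⟩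
  set j0 := Nat.find hex with hj0
  obtain ⟨hj0j0, hnj0⟩ := Nat.find_spec hex
  have hprop : T (e p n) = (T (e p n) j0 / T (e p j0) j0) • T (e p j0) :=
    prop hT hj0j0 hnj0
  have hc : T (e p n) j0 / T (e p j0) j0 ≠ 0 := div_ne_zero hnj0 hj0j0
  refine ⟨⟨j0, hj0j0, ?_⟩, _, hc, hprop⟩
  rintro m hm ⟨h1, h2⟩
  refine Nat.find_min hex hm ⟨h1, ?_⟩
  have hcoord : T (e p n) m = (T (e p n) j0 / T (e p j0) j0) * T (e p j0) m := by
    conv_lhs => rw [hprop]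
    rw [smul_coord]
  rw [hcoord]
  exact mul_ne_zero hc h2

lemma pointkey (j n k : ℕ) (hjj : T (e p j) j ≠ 0) (hjk : T (e p j) k ≠ 0) :
    T (e p n) k = (T (e p n) j / T (e p j) j) * T (e p j) k := by
  by_cases hnj : T (e p n) j = 0
  · rw [hnj, zero_div, zero_mul]
    by_contra hnk
    exact mutual_mem hT hjj hjk hnk hnj
  · have hprop := prop hT hjj hnj
    conv_lhs => rw [hprop]
    rw [smul_coord]

lemma coordpoint (hp : p ≠ ⊤) (f : lp (fun _ : ℕ => ℝ) p) (k j : ℕ)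
    (hjj : T (e p j) j ≠ 0) (hjk : T (e p j) k ≠ 0) :
    T f k = (T (e p j) j)⁻¹ * T f j * T (e p j) k := by
  have h1 := hasSum_coord hp T f k
  have h2 := (hasSum_coord hp T f j).mul_right (T (e p j) k / T (e p j) j)
  have heq : (fun n => f n * T (e p n) k)
      = fun n => f n * T (e p n) j * (T (e p j) k / T (e p j) j) := by
    funext n
    rw [pointkey hT j n k hjj hjk]
    ring
  rw [heq] at h1
  have := h1.unique h2
  rw [this]; ring

end Forward2

end SBP
end Part2

section Part3
namespace SBP

variable {p : ℝ≥0∞} [Fact (1 ≤ p)]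

set_option maxHeartbeats 1000000 in
theorem forward (hp : p ≠ ⊤) (T : lp (fun _ : ℕ => ℝ) p →L[ℝ] lp (fun _ : ℕ => ℝ) p)
    (hT : ∀ f g : lp (fun _ : ℕ => ℝ) p,
      {n : ℕ | f n ≠ 0} ∩ {n : ℕ | T g n ≠ 0} = ∅ →
      {n : ℕ | T f n ≠ 0} ∩ {n : ℕ | T g n ≠ 0} = ∅) :
    ∃ (J : Type) (_ : Countable J) (u : J → lp (fun _ : ℕ => ℝ) p)
      (ψ : J → lp (fun _ : ℕ => ℝ) p →L[ℝ] ℝ),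
      (∀ j, u j ≠ 0) ∧ (∀ j, u j ∈ Set.range T) ∧
      (Pairwise fun i j => {n : ℕ | u i n ≠ 0} ∩ {n : ℕ | u j n ≠ 0} = ∅) ∧
      (∀ j, ψ j ≠ 0) ∧
      (∀ j, ∀ f : lp (fun _ : ℕ => ℝ) p,
        {n : ℕ | f n ≠ 0} ∩ {n : ℕ | u j n ≠ 0} = ∅ → ψ j f = 0) ∧
      (∀ f : lp (fun _ : ℕ => ℝ) p, HasSum (fun j => ψ j f • u j) (T f)) := by
  classical
  -- pairwise disjointness of the bands of the minimal representatives
  have hdisj : ∀ i j : idx T, i ≠ j → ∀ k, T (e p (i : ℕ)) k ≠ 0 →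
      T (e p (j : ℕ)) k ≠ 0 → False := by
    intro i j hij k h1 h2
    have hji : T (e p (j : ℕ)) (i : ℕ) ≠ 0 := mutual_mem hT i.2.1 h1 h2
    have hij' : T (e p (i : ℕ)) (j : ℕ) ≠ 0 := mutual_mem hT j.2.1 h2 h1
    rcases lt_trichotomy (i : ℕ) (j : ℕ) with h | h | h
    · exact j.2.2 (i : ℕ) h ⟨i.2.1, hji⟩
    · exact hij (Subtype.ext h)
    · exact i.2.2 (j : ℕ) h ⟨j.2.1, hij'⟩
  refine ⟨idx T, inferInstance, fun j => T (e p (j : ℕ)),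
    fun j => (T (e p (j : ℕ)) (j : ℕ))⁻¹ • ((ev p (j : ℕ)).comp T),
    fun j => apply_ne_zero j.2.1, fun j => ⟨e p (j : ℕ), rfl⟩, ?_, ?_, ?_, ?_⟩
  · -- pairwise disjoint supports
    intro i j hij
    rw [Set.eq_empty_iff_forall_notMem]
    rintro k ⟨h1, h2⟩
    exact hdisj i j hij k h1 h2
  · -- ψ j ≠ 0
    intro j hψ
    have hψ' : (T (e p (j : ℕ)) (j : ℕ))⁻¹ • ((ev p (j : ℕ)).comp T)
        = (0 : lp (fun _ : ℕ => ℝ) p →L[ℝ] ℝ) := hψ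
    have h1 : ((T (e p (j : ℕ)) (j : ℕ))⁻¹ • ((ev p (j : ℕ)).comp T)) (e p (j : ℕ)) = 0 := by
      rw [hψ']; rfl
    rw [ContinuousLinearMap.smul_apply, ContinuousLinearMap.comp_apply, ev_apply,
      smul_eq_mul, inv_mul_cancel₀ j.2.1] at h1
    exact one_ne_zero h1
  · -- band condition for ψ
    intro j f hset
    have hTfj : T f (j : ℕ) = 0 := by
      have h := hasSum_coord hp T f (j : ℕ)
      have hz : (fun n => f n * T (e p n) (j : ℕ)) = fun _ => (0 : ℝ) := by
        funext n
        by_cases hfn : f n = 0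
        · rw [hfn, zero_mul]
        · have hjn : T (e p (j : ℕ)) n = 0 := by
            by_contra hjn
            exact Set.eq_empty_iff_forall_notMem.1 hset n ⟨hfn, hjn⟩
          have hnj : T (e p n) (j : ℕ) = 0 := by
            by_contra hnj
            exact mutual_mem hT (diag hT (apply_ne_zero hnj)) hnj j.2.1 hjn
          rw [hnj, mul_zero]
      rw [hz] at h
      exact h.unique hasSum_zero
    rw [ContinuousLinearMap.smul_apply, ContinuousLinearMap.comp_apply, ev_apply,
      smul_eq_mul, hTfj, mul_zero]
  · -- HasSum
    intro f
    set σ : ℕ → Option (idx T) :=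
      fun k => if h : ∃ j : idx T, T (e p (j : ℕ)) k ≠ 0 then some h.choose else none with hσ
    have hσk : ∀ k, σ k
        = if h : ∃ j : idx T, T (e p (j : ℕ)) k ≠ 0 then some h.choose else none :=
      fun k => rfl
    have σ_spec : ∀ (k : ℕ) (j : idx T), σ k = some j ↔ T (e p (j : ℕ)) k ≠ 0 := by
      intro k j
      constructor
      · intro h
        rw [hσk] at h
        split_ifs at h with hex
        · have := Option.some.inj h
          rw [← this]
          exact hex.choose_spec
      · intro hk
        have hex : ∃ j : idx T, T (e p (j : ℕ)) k ≠ 0 := ⟨j, hk⟩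
        rw [hσk, dif_pos hex]
        congr 1
        by_contra hne
        exact hdisj _ j hne k hex.choose_spec hk
    have key0 : ∀ k, σ k = none → T f k = 0 := by
      intro k hk
      have hnex : ¬ ∃ j : idx T, T (e p (j : ℕ)) k ≠ 0 := by
        intro hex
        rw [hσk, dif_pos hex] at hk
        cases hk
      have h := hasSum_coord hp T f k
      have hz : (fun n => f n * T (e p n) k) = fun _ => (0 : ℝ) := by
        funext n
        by_cases hnk : T (e p n) k = 0
        · rw [hnk, mul_zero]
        · exfalso
          obtain ⟨j, c, hc, heq⟩ := min_class hT n (diag hT (apply_ne_zero hnk))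
          have : T (e p n) k = c * T (e p (j : ℕ)) k := by
            conv_lhs => rw [heq]
            rw [smul_coord]
          refine hnex ⟨j, ?_⟩
          intro h0
          rw [this, h0, mul_zero] at hnk
          exact hnk rfl
      rw [hz] at h
      exact h.unique hasSum_zero
    have h1 : HasSum (fun k : ℕ => lp.single p k (T f k)) (T f) := lp.hasSum_single hp (T f)
    have h1' := (Equiv.sigmaFiberEquiv σ).hasSum_iff.mpr h1
    set g : Option (idx T) → lp (fun _ : ℕ => ℝ) p :=
      fun o => o.elim 0 (fun j => ((T (e p (j : ℕ)) (j : ℕ))⁻¹ * T f (j : ℕ)) • T (e p (j : ℕ)))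
      with hg
    have h2 : ∀ o : Option (idx T),
        HasSum (fun k : {k // σ k = o} => lp.single p (k : ℕ) (T f (k : ℕ))) (g o) := by
      rintro (_ | j)
      · have hz : (fun k : {k // σ k = none} => lp.single p (k : ℕ) (T f (k : ℕ)))
            = fun _ => (0 : lp (fun _ : ℕ => ℝ) p) := by
          funext k
          rw [key0 _ k.2, single_zero]
        rw [hz]
        exact hasSum_zero
      · set c : ℝ := (T (e p (j : ℕ)) (j : ℕ))⁻¹ * T f (j : ℕ) with hc
        set v : lp (fun _ : ℕ => ℝ) p := c • T (e p (j : ℕ)) with hv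
        have hs : HasSum (fun k : ℕ => lp.single p k (v k)) v := lp.hasSum_single hp v
        have hsupp : (Function.support fun k : ℕ => lp.single p k (v k))
            ⊆ {k : ℕ | σ k = some j} := by
          intro k hk
          have hk' : (lp.single p k (v k) : lp (fun _ : ℕ => ℝ) p) ≠ 0 := hk
          have hvk : v k ≠ 0 := fun h0 => hk' (by rw [h0]; exact single_zero k)
          have : T (e p (j : ℕ)) k ≠ 0 := by
            intro h0
            apply hvk
            rw [hv, smul_coord, h0, mul_zero]
          exact (σ_spec k j).2 this
        have hres := (hasSum_subtype_iff_of_support_subset hsupp).2 hs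
        have hres' : HasSum (fun k : {k // σ k = some j} =>
            (lp.single p (k : ℕ) (v (k : ℕ)) : lp (fun _ : ℕ => ℝ) p)) v := hres
        exact hres'.congr_fun fun k => by
          have hjk : T (e p (j : ℕ)) (k : ℕ) ≠ 0 := (σ_spec (k : ℕ) j).1 k.2
          have hcp := coordpoint hT hp f (k : ℕ) (j : ℕ) j.2.1 hjk
          have harg : T f (k : ℕ) = v (k : ℕ) := by rw [hv, smul_coord, hc, hcp]
          show (lp.single p (k : ℕ) (T f (k : ℕ)) : lp (fun _ : ℕ => ℝ) p)
              = lp.single p (k : ℕ) (v (k : ℕ))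
          rw [harg]
    have h3 : HasSum g (T f) := h1'.sigma h2
    have hzn : ∀ x ∉ Set.range (some : idx T → Option (idx T)), g x = 0 := by
      rintro (_ | j) hx
      · rfl
      · exact absurd ⟨j, rfl⟩ hx
    have h4 : HasSum (g ∘ some) (T f) :=
      ((Option.some_injective (idx T)).hasSum_iff hzn).2 h3
    have hfin : (g ∘ some)
        = fun j : idx T => (((T (e p (j : ℕ)) (j : ℕ))⁻¹ • ((ev p (j : ℕ)).comp T)) f)
            • T (e p (j : ℕ)) := by
      funext j
      rw [hg]
      simp only [Function.comp_apply, Option.elim]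
      rw [ContinuousLinearMap.smul_apply, ContinuousLinearMap.comp_apply, ev_apply, smul_eq_mul]
    rw [hfin] at h4
    exact h4

end SBP
end Part3

section Part4
namespace SBP

variable {p : ℝ≥0∞} [Fact (1 ≤ p)]

theorem backward (hp : p ≠ ⊤) (T : lp (fun _ : ℕ => ℝ) p →L[ℝ] lp (fun _ : ℕ => ℝ) p)
    (J : Type) (u : J → lp (fun _ : ℕ => ℝ) p)
    (ψ : J → lp (fun _ : ℕ => ℝ) p →L[ℝ] ℝ)
    (hdisj : Pairwise fun i j => {n : ℕ | u i n ≠ 0} ∩ {n : ℕ | u j n ≠ 0} = ∅)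
    (hband : ∀ j, ∀ f : lp (fun _ : ℕ => ℝ) p,
      {n : ℕ | f n ≠ 0} ∩ {n : ℕ | u j n ≠ 0} = ∅ → ψ j f = 0)
    (hsum : ∀ f : lp (fun _ : ℕ => ℝ) p, HasSum (fun j => ψ j f • u j) (T f)) :
    ∀ f g : lp (fun _ : ℕ => ℝ) p,
      {n : ℕ | f n ≠ 0} ∩ {n : ℕ | T g n ≠ 0} = ∅ →
      {n : ℕ | T f n ≠ 0} ∩ {n : ℕ | T g n ≠ 0} = ∅ := by
  intro f g hfg
  have ev_sum : ∀ (x : lp (fun _ : ℕ => ℝ) p) (k : ℕ),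
      HasSum (fun j => ψ j x * u j k) (T x k) := by
    intro x k
    have h := (hsum x).mapL (ev p k)
    exact h.congr_fun fun j => (smul_coord (ψ j x) (u j) k).symm
  have key1 : ∀ (x : lp (fun _ : ℕ => ℝ) p) (k : ℕ) (j : J),
      u j k ≠ 0 → T x k = ψ j x * u j k := by
    intro x k j hjk
    have h := ev_sum x k
    have h2 : HasSum (fun j' => ψ j' x * u j' k) (ψ j x * u j k) := by
      refine hasSum_single j fun j' hj' => ?_
      have h0 : u j' k = 0 := by
        by_contra h0
        exact Set.eq_empty_iff_forall_notMem.1 (hdisj hj') k ⟨h0, hjk⟩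
      rw [h0, mul_zero]
    exact h.unique h2
  have key0 : ∀ (x : lp (fun _ : ℕ => ℝ) p) (k : ℕ),
      (∀ j : J, u j k = 0) → T x k = 0 := by
    intro x k hk
    have h := ev_sum x k
    have hz : (fun j => ψ j x * u j k) = fun _ => (0 : ℝ) :=
      funext fun j => by rw [hk j, mul_zero]
    rw [hz] at h
    exact h.unique hasSum_zero
  rw [Set.eq_empty_iff_forall_notMem]
  rintro k ⟨h1, h2⟩
  by_cases hex : ∃ j : J, u j k ≠ 0
  · obtain ⟨j, hjk⟩ := hex
    have hTgk := key1 g k j hjk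
    have hψg : ψ j g ≠ 0 := fun h0 => h2 (by rw [hTgk, h0, zero_mul])
    have hsub : ∀ k', u j k' ≠ 0 → T g k' ≠ 0 := by
      intro k' hk'
      rw [key1 g k' j hk']
      exact mul_ne_zero hψg hk'
    have hfu : {n : ℕ | f n ≠ 0} ∩ {n : ℕ | u j n ≠ 0} = ∅ := by
      rw [Set.eq_empty_iff_forall_notMem]
      rintro m ⟨hm1, hm2⟩
      exact Set.eq_empty_iff_forall_notMem.1 hfg m ⟨hm1, hsub m hm2⟩
    have hψf : ψ j f = 0 := hband j f hfu
    exact h1 (by rw [key1 f k j hjk, hψf, zero_mul])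
  · exact h2 (key0 g k fun j => not_not.1 fun h => hex ⟨j, h⟩)

end SBP
end Part4

/-- For `1 ≤ p < ∞`, a continuous linear operator `T` on `ℓ^p` is semi band
preserving iff it is a weighted conditional expectation operator. -/
theorem lp_semiBandPreserving_iff_weightedCondExp
    (p : ℝ≥0∞) [Fact (1 ≤ p)] (hp : p ≠ ⊤)
    (T : lp (fun _ : ℕ => ℝ) p →L[ℝ] lp (fun _ : ℕ => ℝ) p) :
    (∀ f g : lp (fun _ : ℕ => ℝ) p,
        {n : ℕ | f n ≠ 0} ∩ {n : ℕ | T g n ≠ 0} = ∅ →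
        {n : ℕ | T f n ≠ 0} ∩ {n : ℕ | T g n ≠ 0} = ∅) ↔
    ∃ (J : Type) (_ : Countable J) (u : J → lp (fun _ : ℕ => ℝ) p)
      (ψ : J → lp (fun _ : ℕ => ℝ) p →L[ℝ] ℝ),
      (∀ j, u j ≠ 0) ∧ (∀ j, u j ∈ Set.range T) ∧
      (Pairwise fun i j => {n : ℕ | u i n ≠ 0} ∩ {n : ℕ | u j n ≠ 0} = ∅) ∧
      (∀ j, ψ j ≠ 0) ∧
      (∀ j, ∀ f : lp (fun _ : ℕ => ℝ) p,
        {n : ℕ | f n ≠ 0} ∩ {n : ℕ | u j n ≠ 0} = ∅ → ψ j f = 0) ∧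
      (∀ f : lp (fun _ : ℕ => ℝ) p, HasSum (fun j => ψ j f • u j) (T f)) := by
  constructor
  · intro hT
    exact SBP.forward hp T hT
  · rintro ⟨J, _, u, ψ, -, -, hdisj, -, hband, hsum⟩
    exact SBP.backward hp T J u ψ hdisj hband hsum
end

section
/- Let X be a real Banach lattice and T : X → X a continuous linear operator. Suppose there exist an index type J, a family (u_j)_{j∈J} of pairwise disjoint nonzero elements of X, and continuous linear functionals (ψ_j)_{j∈J} on X satisfying ψ_j f = 0 whenever f ⊥ u_j, such that for every f ∈ X the family (fun j => ψ_j(f) • u_j) has sum T f (HasSum). Then T is semi containment preserving: for all f, g ∈ X, f ◁ Tg implies Tf ◁ Tg. -/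
section Aux

variable {X : Type*} [NormedAddCommGroup X] [Lattice X] [HasSolidNorm X] [IsOrderedAddMonoid X]
    [NormedSpace ℝ X] [PosSMulStrictMono ℝ X] [PosSMulReflectLT ℝ X]

private lemma aux_inf_add {a b c : X} (ha : 0 ≤ a) (hb : 0 ≤ b) (hc : 0 ≤ c) :
    a ⊓ (b + c) ≤ a ⊓ b + a ⊓ c := by
  rw [← sub_le_iff_le_add', sub_inf]
  refine sup_le ?_ ?_
  · exact le_trans (sub_nonpos.mpr inf_le_left) (le_inf ha hc)
  · refine le_inf ?_ ?_
    · exact sub_le_iff_le_add.mpr (le_trans inf_le_left (le_add_of_nonneg_right hb))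
    · exact sub_le_iff_le_add.mpr (le_trans inf_le_right (by rw [add_comm]))

private lemma disj_add {a x y : X} (ha : 0 ≤ a) (hx : a ⊓ |x| = 0) (hy : a ⊓ |y| = 0) :
    a ⊓ |x + y| = 0 := by
  refine le_antisymm ?_ (le_inf ha (abs_nonneg _))
  calc a ⊓ |x + y| ≤ a ⊓ (|x| + |y|) :=
        inf_le_inf_left a (abs_add_le x y)
    _ ≤ a ⊓ |x| + a ⊓ |y| := aux_inf_add ha (abs_nonneg _) (abs_nonneg _)
    _ = 0 := by rw [hx, hy, add_zero]

private lemma disj_smul_nonneg {a b : X} (ha : 0 ≤ a) (hb : 0 ≤ b) (hab : a ⊓ b = 0)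
    {t : ℝ} (ht : 0 ≤ t) : a ⊓ (t • b) = 0 := by
  set t' : ℝ := max t 1 with ht'
  have ht'pos : (0:ℝ) < t' := lt_of_lt_of_le one_pos (le_max_right _ _)
  have h1 : t • b ≤ t' • b := smul_le_smul_of_nonneg_right (le_max_left _ _) hb
  have h2 : a ≤ t' • a := by
    have := smul_nonneg (sub_nonneg.mpr (le_max_right t 1)) ha
    rwa [sub_smul, one_smul, sub_nonneg] at this
  have h3 : (t' • a) ⊓ (t' • b) = 0 := by
    have := (OrderIso.smulRight (β := X) ht'pos).map_inf a b
    simp only [OrderIso.smulRight_apply] at this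
    rw [← this, hab, smul_zero]
  refine le_antisymm ?_ (le_inf ha (smul_nonneg ht hb))
  calc a ⊓ (t • b) ≤ (t' • a) ⊓ (t' • b) := inf_le_inf h2 h1
    _ = 0 := h3

private lemma abs_smul_le (c : ℝ) (x : X) : |c • x| ≤ |c| • |x| := by
  rcases le_or_gt 0 c with hc | hc
  · rw [abs_of_nonneg hc]
    refine abs_le'.mpr ⟨?_, ?_⟩
    · exact smul_le_smul_of_nonneg_left (le_abs_self x) hc
    · rw [← smul_neg]
      exact smul_le_smul_of_nonneg_left (neg_le_abs x) hc
  · have h : c • x = (-c) • (-x) := by rw [neg_smul, smul_neg, neg_neg]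
    rw [h, abs_of_neg hc, ← abs_neg x]
    refine abs_le'.mpr ⟨?_, ?_⟩
    · exact smul_le_smul_of_nonneg_left (le_abs_self (-x)) (neg_nonneg.mpr hc.le)
    · rw [← smul_neg]
      exact smul_le_smul_of_nonneg_left (neg_le_abs (-x)) (neg_nonneg.mpr hc.le)

private lemma disj_smul {a x : X} (ha : 0 ≤ a) (hx : a ⊓ |x| = 0) (c : ℝ) :
    a ⊓ |c • x| = 0 := by
  refine le_antisymm ?_ (le_inf ha (abs_nonneg _))
  calc a ⊓ |c • x| ≤ a ⊓ (|c| • |x|) := inf_le_inf_left a (abs_smul_le c x)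
    _ = 0 := disj_smul_nonneg ha (abs_nonneg x) hx (abs_nonneg c)

private lemma disj_zero {a : X} (ha : 0 ≤ a) : a ⊓ |(0:X)| = 0 := by
  rw [abs_zero]; exact inf_eq_right.mpr ha

private lemma disj_finset {a : X} (ha : 0 ≤ a) {ι : Type*} (x : ι → X) (s : Finset ι)
    (h : ∀ i ∈ s, a ⊓ |x i| = 0) : a ⊓ |∑ i ∈ s, x i| = 0 := by
  classical
  induction s using Finset.induction_on with
  | empty => simpa using disj_zero ha
  | insert _ _ hni ih =>
    rw [Finset.sum_insert hni]
    exact disj_add ha (h _ (Finset.mem_insert_self _ _))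
      (ih fun i hi => h i (Finset.mem_insert_of_mem hi))

private lemma disj_hasSum {a s : X} (ha : 0 ≤ a) {ι : Type*} {x : ι → X}
    (hx : HasSum x s) (h : ∀ i, a ⊓ |x i| = 0) : a ⊓ |s| = 0 := by
  have hC : IsClosed {y : X | a ⊓ |y| = 0} := by
    have hcont : Continuous fun y : X => a ⊓ |y| :=
      continuous_const.inf (continuous_id.sup continuous_neg)
    exact isClosed_eq hcont continuous_const
  exact hC.mem_of_tendsto hx (Filter.Eventually.of_forall fun t => disj_finset ha x t
    (fun i _ => h i))

private lemma disj_sub {a x y : X} (ha : 0 ≤ a) (hx : a ⊓ |x| = 0) (hy : a ⊓ |y| = 0) :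
    a ⊓ |x - y| = 0 := by
  rw [sub_eq_add_neg]
  exact disj_add ha hx (by rwa [abs_neg])

end Aux

/-- Every weighted conditional expectation operator on a real Banach lattice
is semi containment preserving. -/
theorem weightedCondExp_semiContainmentPreserving
    {X : Type*} [NormedAddCommGroup X] [Lattice X] [HasSolidNorm X] [IsOrderedAddMonoid X]
    [NormedSpace ℝ X]
    [CompleteSpace X] [PosSMulStrictMono ℝ X] [PosSMulReflectLT ℝ X]
    (T : X →L[ℝ] X)
    (hT : ∃ (J : Type) (u : J → X) (ψ : J → X →L[ℝ] ℝ),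
      (∀ j, u j ≠ 0) ∧
      (Pairwise fun i j => |u i| ⊓ |u j| = 0) ∧
      (∀ j, ∀ f : X, |f| ⊓ |u j| = 0 → ψ j f = 0) ∧
      (∀ f : X, HasSum (fun j => ψ j f • u j) (T f))) :
    ∀ f g : X, (∀ h : X, |h| ⊓ |T g| = 0 → |h| ⊓ |f| = 0) →
      (∀ h : X, |h| ⊓ |T g| = 0 → |h| ⊓ |T f| = 0) := by
  classical
  obtain ⟨J, u, ψ, hu0, hdisj, hψ, hsum⟩ := hT
  intro f g hfg h hh
  have hterm : ∀ j, |h| ⊓ |ψ j f • u j| = 0 := by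
    intro j
    by_cases hjg : ψ j g = 0
    · -- u j is disjoint from T g, hence from f, hence ψ j f = 0
      have huTg : |u j| ⊓ |T g| = 0 := by
        refine disj_hasSum (abs_nonneg _) (hsum g) fun i => ?_
        by_cases hij : i = j
        · subst hij; rw [hjg, zero_smul]; exact disj_zero (abs_nonneg _)
        · refine disj_smul (abs_nonneg _) ?_ (ψ i g)
          rw [inf_comm]; exact hdisj hij
      have hjf : ψ j f = 0 := hψ j f (by rw [inf_comm]; exact hfg _ huTg)
      rw [hjf, zero_smul]
      exact disj_zero (abs_nonneg _)
    · -- ψ j g ≠ 0 : show |h| ⊓ |u j| = 0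
      set w : X := |h| ⊓ |u j| with hw
      have hw0 : 0 ≤ w := le_inf (abs_nonneg _) (abs_nonneg _)
      have h1 : w ⊓ |0 - ψ j g • u j + T g| = 0 := by
        refine disj_hasSum hw0 ((hsum g).update j 0) fun i => ?_
        by_cases hij : i = j
        · subst hij
          rw [Function.update_self]
          exact disj_zero hw0
        · rw [Function.update_of_ne hij]
          refine disj_smul hw0 ?_ (ψ i g)
          refine le_antisymm ?_ (le_inf hw0 (abs_nonneg _))
          calc w ⊓ |u i| ≤ |u j| ⊓ |u i| := inf_le_inf_right _ inf_le_right
            _ = 0 := hdisj (Ne.symm hij)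
      rw [show (0:X) - ψ j g • u j + T g = T g - ψ j g • u j by abel] at h1
      have h2 : w ⊓ |T g| = 0 := by
        refine le_antisymm ?_ (le_inf hw0 (abs_nonneg _))
        calc w ⊓ |T g| ≤ |h| ⊓ |T g| := inf_le_inf_right _ inf_le_left
          _ = 0 := hh
      have h3 : w ⊓ |ψ j g • u j| = 0 := by
        have heq : ψ j g • u j = T g - (T g - ψ j g • u j) := by abel
        rw [heq]
        exact disj_sub hw0 h2 h1
      have h4 : w ⊓ |u j| = 0 := by
        have := disj_smul hw0 h3 (ψ j g)⁻¹
        rwa [inv_smul_smul₀ hjg] at this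
      have hwz : w = 0 :=
        le_antisymm (le_of_le_of_eq (le_inf le_rfl inf_le_right) h4) hw0
      exact disj_smul (abs_nonneg _) hwz (ψ j f)
  exact disj_hasSum (abs_nonneg _) (hsum f) hterm
end

section
/- Let (Ω, Σ, μ) be a σ-finite measure space, 1 ≤ p < ∞, and let T be a linear operator on X = Lp(Ω, μ; ℝ). Then for all f, g ∈ X there exists h ∈ X such that the support of T h equals the union of the support of T f and the support of T g, up to a μ-null set. -/
open MeasureTheory
open scoped ENNReal

/-- For a linear operator `T` on `Lp(Ω, μ; ℝ)` (`μ` σ-finite, `1 ≤ p < ∞`) and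
`f, g ∈ Lp`, there is `h ∈ Lp` whose image has support equal (mod `μ`) to the union of the
supports of `T f` and `T g`. -/
theorem exists_support_eq_union
    {Ω : Type*} [MeasurableSpace Ω] (μ : Measure Ω) [SigmaFinite μ]
    (p : ℝ≥0∞) [Fact (1 ≤ p)] (hp : p ≠ ⊤)
    (T : Lp ℝ p μ →ₗ[ℝ] Lp ℝ p μ) (f g : Lp ℝ p μ) :
    ∃ h : Lp ℝ p μ,
      Function.support ⇑(T h) =ᵐ[μ]
        ((Function.support ⇑(T f) ∪ Function.support ⇑(T g) : Set Ω)) := by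
  set F : Ω → ℝ := ⇑(T f) with hF
  set G : Ω → ℝ := ⇑(T g) with hG
  have hFm : StronglyMeasurable F := Lp.stronglyMeasurable _
  have hGm : StronglyMeasurable G := Lp.stronglyMeasurable _
  -- bad set in ℝ × Ω
  set s : Set (ℝ × Ω) := {q | G q.2 ≠ 0 ∧ F q.2 + q.1 * G q.2 = 0} with hs
  have hmeas : MeasurableSet s := by
    have h1 : Measurable fun q : ℝ × Ω => G q.2 := hGm.measurable.comp measurable_snd
    have h2 : Measurable fun q : ℝ × Ω => F q.2 + q.1 * G q.2 :=
      ((hFm.measurable.comp measurable_snd).add (measurable_fst.mul h1))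
    exact (h1 (measurableSet_singleton 0).compl).inter (h2 (measurableSet_singleton 0))
  have hnull : (volume.prod μ) s = 0 := by
    rw [Measure.prod_apply_symm hmeas]
    have : ∀ x : Ω, volume ((fun c => (c, x)) ⁻¹' s) = 0 := by
      intro x
      by_cases hGx : G x = 0
      · convert measure_empty (μ := volume)
        ext c; simp [s, hGx]
      · have : ((fun c : ℝ => (c, x)) ⁻¹' s) ⊆ {-F x / G x} := by
          intro c hc
          rcases hc with ⟨_, hc2⟩
          simp only [Set.mem_singleton_iff]
          field_simp
          linarith
        exact measure_mono_null this (measure_singleton _)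
    simp [this]
  have hae : ∀ᵐ c : ℝ, μ (Prod.mk c ⁻¹' s) = 0 := by
    have := (Measure.measure_prod_null hmeas).1 hnull
    filter_upwards [this] with c hc using hc
  obtain ⟨c, hc⟩ := hae.exists
  refine ⟨f + c • g, ?_⟩
  have hTh : ⇑(T (f + c • g)) =ᵐ[μ] fun x => F x + c * G x := by
    have h1 : T (f + c • g) = T f + c • T g := by
      rw [map_add, LinearMap.map_smul]
    rw [h1]
    filter_upwards [Lp.coeFn_add (T f) (c • T g), Lp.coeFn_smul c (T g)] with x hx1 hx2
    rw [hx1]; simp only [Pi.add_apply, hx2, Pi.smul_apply, smul_eq_mul]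
    rfl
  have hsec : ∀ᵐ x ∂μ, ¬(G x ≠ 0 ∧ F x + c * G x = 0) := by
    rw [← compl_mem_ae_iff] at hc
    filter_upwards [hc] with x hx
    exact hx
  rw [Filter.eventuallyEq_set]
  filter_upwards [hTh, hsec] with x hx1 hx2
  simp only [Function.mem_support, Set.mem_union, hx1]
  constructor
  · intro hne
    by_contra hcon
    push_neg at hcon
    simp [hcon.1, hcon.2] at hne
  · intro hor
    by_cases hGx : G x = 0
    · rcases hor with hFx | hGx' <;> simp_all
    · intro h0
      exact hx2 ⟨hGx, h0⟩
end

section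
/- Let (Ω, Σ, μ) be a σ-finite measure space, 1 ≤ p < ∞, and let T be a continuous linear operator on X = Lp(Ω, μ; ℝ). If (f_j)_{j∈ℕ} is a sequence in X such that the supports of the functions T f_j are pairwise disjoint up to μ-null sets, then there exists h ∈ X such that the support of T h equals ⋃_{j∈ℕ} supp(T f_j), up to a μ-null set. -/
open MeasureTheory Filter Topology
open scoped ENNReal

private lemma Lp.coeFn_finset_sum {Ω : Type*} [MeasurableSpace Ω] {μ : Measure Ω}
    {p : ℝ≥0∞} (s : Finset ℕ) (g : ℕ → Lp ℝ p μ) :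
    ⇑(∑ j ∈ s, g j) =ᵐ[μ] fun x => ∑ j ∈ s, g j x := by
  classical
  induction s using Finset.induction_on with
  | empty =>
    simp only [Finset.sum_empty]
    filter_upwards [Lp.coeFn_zero (E := ℝ) (p := p) (μ := μ)] with x hx
    simpa using hx
  | insert a s hj ih =>
    rw [Finset.sum_insert hj]
    filter_upwards [Lp.coeFn_add (g a) (∑ j ∈ s, g j), ih] with x hx hx2
    simp only [Pi.add_apply] at hx
    rw [Finset.sum_insert hj, hx, hx2]

/-- For a continuous linear operator `T` on `Lp(Ω, μ; ℝ)` (`μ` σ-finite,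
`1 ≤ p < ∞`) and a sequence `f_j` such that the supports of `T f_j` are pairwise a.e. disjoint,
there is `h ∈ Lp` with support of `T h` equal (mod `μ`) to `⋃ j, supp (T f_j)`. -/
theorem exists_support_eq_iUnion
    {Ω : Type*} [MeasurableSpace Ω] (μ : Measure Ω) [SigmaFinite μ]
    (p : ℝ≥0∞) [Fact (1 ≤ p)] (hp : p ≠ ⊤)
    (T : Lp ℝ p μ →L[ℝ] Lp ℝ p μ) (f : ℕ → Lp ℝ p μ)
    (hdisj : Pairwise fun i j =>
      μ (Function.support ⇑(T (f i)) ∩ Function.support ⇑(T (f j))) = 0) :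
    ∃ h : Lp ℝ p μ,
      Function.support ⇑(T h) =ᵐ[μ]
        ((⋃ j : ℕ, Function.support ⇑(T (f j)) : Set Ω)) := by
  classical
  have hp0 : p ≠ 0 := by
    have h1 : (1 : ℝ≥0∞) ≤ p := Fact.out
    exact fun h => by simp [h] at h1
  -- coefficients
  set c : ℕ → ℝ := fun j => (1/2 : ℝ) ^ j / (1 + ‖f j‖) with hc
  have hcpos : ∀ j, 0 < c j := fun j =>
    div_pos (pow_pos (by norm_num) j) (by positivity)
  have hsum : Summable (fun j => c j • f j) := by
    apply Summable.of_norm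
    apply Summable.of_nonneg_of_le (fun j => norm_nonneg _)
      (fun j => ?_) (summable_geometric_of_lt_one (by norm_num) (by norm_num : (1/2:ℝ) < 1))
    rw [norm_smul, Real.norm_eq_abs, abs_of_pos (hcpos j), hc]
    rw [div_mul_eq_mul_div, div_le_iff₀ (by positivity)]
    have : (1/2:ℝ)^j * ‖f j‖ ≤ (1/2)^j * (1+‖f j‖) :=
      mul_le_mul_of_nonneg_left (by linarith [norm_nonneg (f j)]) (by positivity)
    linarith
  set h : Lp ℝ p μ := ∑' j, c j • f j with hh
  refine ⟨h, ?_⟩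
  have hTh : HasSum (fun j => c j • T (f j)) (T h) := by
    have := (hsum.hasSum).mapL T
    simpa [_root_.map_smul] using this
  -- partial sums
  set S : ℕ → Lp ℝ p μ := fun n => ∑ j ∈ Finset.range n, c j • T (f j) with hS
  have hTend : Tendsto S atTop (𝓝 (T h)) := hTh.tendsto_sum_nat
  -- convergence in measure and a.e. subsequence
  have hmeas : TendstoInMeasure μ (fun n => ⇑(S n)) atTop ⇑(T h) := by
    apply tendstoInMeasure_of_tendsto_eLpNorm_of_ne_top hp0 hp
      (fun n => Lp.aestronglyMeasurable _) (Lp.aestronglyMeasurable _)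
    exact (Lp.tendsto_Lp_iff_tendsto_eLpNorm' S (T h)).mp hTend
  obtain ⟨ns, hns_mono, hns⟩ := hmeas.exists_seq_tendsto_ae
  -- pointwise identification of partial sums
  have haeS : ∀ᵐ x ∂μ, ∀ n, (S n) x = ∑ j ∈ Finset.range n, c j * (T (f j)) x := by
    rw [ae_all_iff]
    intro n
    filter_upwards [Lp.coeFn_finset_sum (Finset.range n) (fun j => c j • T (f j)),
      ae_all_iff.2 (fun j : ℕ => Lp.coeFn_smul (c j) (T (f j)))] with x hx hx2
    rw [hS]
    simp only [hx]
    exact Finset.sum_congr rfl fun j _ => by simpa using hx2 j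
  -- a.e. disjointness
  have hdis : ∀ᵐ x ∂μ, ∀ i j : ℕ, i ≠ j →
      ¬(x ∈ Function.support ⇑(T (f i)) ∧ x ∈ Function.support ⇑(T (f j))) := by
    rw [ae_all_iff]
    intro i
    rw [ae_all_iff]
    intro j
    by_cases hij : i = j
    · filter_upwards with x hne; exact absurd hij hne
    · have := hdisj hij
      have h0 : ∀ᵐ x ∂μ, x ∉ (Function.support ⇑(T (f i)) ∩ Function.support ⇑(T (f j))) := by
        rw [ae_iff]; simp only [not_not]; exact this
      filter_upwards [h0] with x hx _ hmem
      exact hx ⟨hmem.1, hmem.2⟩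
  filter_upwards [hns, haeS, hdis] with x hx hxS hxd
  show (x ∈ Function.support ⇑(T h)) = (x ∈ ⋃ j, Function.support ⇑(T (f j)))
  rw [eq_iff_iff]
  simp only [Set.mem_iUnion, Function.mem_support]
  by_cases hcase : ∃ j, (T (f j)) x ≠ 0
  · obtain ⟨j0, hj0⟩ := hcase
    have hzero : ∀ j, j ≠ j0 → (T (f j)) x = 0 := by
      intro j hj
      by_contra hne
      exact hxd j j0 hj ⟨hne, hj0⟩
    -- eventually the pointwise partial sums equal c j0 * (T (f j0)) x
    have hev : ∀ᶠ k in atTop, (S (ns k)) x = c j0 * (T (f j0)) x := by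
      filter_upwards [eventually_ge_atTop (j0 + 1)] with k hk
      have hnk : j0 + 1 ≤ ns k := le_trans hk (hns_mono.le_apply)
      rw [hxS (ns k)]
      rw [Finset.sum_eq_single_of_mem j0 (Finset.mem_range.2 (by omega))]
      intro j _ hj
      rw [hzero j hj, mul_zero]
    have hlim : Tendsto (fun k => (S (ns k)) x) atTop (𝓝 (c j0 * (T (f j0)) x)) :=
      Tendsto.congr' (by filter_upwards [hev] with k hk using hk.symm) tendsto_const_nhds
    have heq := tendsto_nhds_unique hx hlim
    have : (T h) x ≠ 0 := by
      rw [heq]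
      exact mul_ne_zero (ne_of_gt (hcpos j0)) hj0
    constructor
    · intro _; exact ⟨j0, hj0⟩
    · intro _; exact this
  · push_neg at hcase
    have hall : ∀ n, (S n) x = 0 := by
      intro n
      rw [hxS n]
      apply Finset.sum_eq_zero
      intro j _
      rw [hcase j, mul_zero]
    have hlim : Tendsto (fun k => (S (ns k)) x) atTop (𝓝 0) := by
      simpa [hall] using (tendsto_const_nhds : Tendsto (fun _ : ℕ => (0:ℝ)) atTop (𝓝 0))
    have heq := tendsto_nhds_unique hx hlim
    constructor
    · intro hne; exact absurd heq hne
    · rintro ⟨j, hj⟩; exact absurd (hcase j) hj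
end

section
/- Let 1 ≤ p < ∞ and let T : ℓ^p → ℓ^p be a continuous linear operator that is semi band preserving. If f, g ∈ ℓ^p satisfy supp(Tg) ⊆ supp(Tf), then there exists h ∈ ℓ^p with supp(Th) = supp(Tf) \ supp(Tg). -/
open scoped ENNReal

/-- Coordinate evaluation as a continuous linear map on `ℓ^p`. -/
noncomputable def lpEvalCLM (p : ℝ≥0∞) [Fact (1 ≤ p)] (n : ℕ) :
    lp (fun _ : ℕ => ℝ) p →L[ℝ] ℝ :=
  LinearMap.mkContinuous
    { toFun := fun x => x n
      map_add' := fun x y => by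
        have := lp.coeFn_add x y; simp [congrFun this n]
      map_smul' := fun c x => by
        have := lp.coeFn_smul c x; simp [congrFun this n] }
    1
    (fun x => by
      have hp0 : p ≠ 0 := by
        have : (1 : ℝ≥0∞) ≤ p := Fact.out
        exact fun h => by simp [h] at this
      simpa using lp.norm_apply_le_norm hp0 x n)

theorem lpEvalCLM_apply (p : ℝ≥0∞) [Fact (1 ≤ p)] (n : ℕ) (x : lp (fun _ : ℕ => ℝ) p) :
    lpEvalCLM p n x = x n := rfl

/-- If `T` is a semi band preserving continuous linear operator on `ℓ^p`
(`1 ≤ p < ∞`) and `supp (T g) ⊆ supp (T f)`, then `supp (T f) \ supp (T g)` is also the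
support of some element of the range of `T`. -/
theorem lp_sbp_exists_support_eq_diff
    (p : ℝ≥0∞) [Fact (1 ≤ p)] (hp : p ≠ ⊤)
    (T : lp (fun _ : ℕ => ℝ) p →L[ℝ] lp (fun _ : ℕ => ℝ) p)
    (hSBP : ∀ f g : lp (fun _ : ℕ => ℝ) p,
      {n : ℕ | f n ≠ 0} ∩ {n : ℕ | T g n ≠ 0} = ∅ →
      {n : ℕ | T f n ≠ 0} ∩ {n : ℕ | T g n ≠ 0} = ∅)
    (f g : lp (fun _ : ℕ => ℝ) p)
    (hsub : {n : ℕ | T g n ≠ 0} ⊆ {n : ℕ | T f n ≠ 0}) :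
    ∃ h : lp (fun _ : ℕ => ℝ) p,
      {n : ℕ | T h n ≠ 0} = {n : ℕ | T f n ≠ 0} \ {n : ℕ | T g n ≠ 0} := by
  classical
  have hp1 : (1 : ℝ≥0∞) ≤ p := Fact.out
  have hp0' : 0 < p.toReal :=
    ENNReal.toReal_pos (by exact fun h => by simp [h] at hp1) hp
  -- f2 : the restriction of f to the complement of supp (T g)
  have hmem : Memℓp (fun n : ℕ => if T g n = 0 then f n else 0) p := by
    apply memℓp_gen
    refine Summable.of_nonneg_of_le (fun n => Real.rpow_nonneg (norm_nonneg _) _)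
      (fun n => ?_) ((lp.memℓp f).summable hp0')
    refine Real.rpow_le_rpow (norm_nonneg _) ?_ hp0'.le
    by_cases h : T g n = 0 <;> simp [h]
  set f2 : lp (fun _ : ℕ => ℝ) p := ⟨fun n => if T g n = 0 then f n else 0, hmem⟩ with hf2def
  have f2_apply : ∀ n, f2 n = if T g n = 0 then f n else 0 := fun n => rfl
  set f1 : lp (fun _ : ℕ => ℝ) p := f - f2 with hf1def
  have f1_apply : ∀ n, f1 n = f n - f2 n := fun n => by
    rw [hf1def]; exact congrFun (lp.coeFn_sub f f2) n
  have f1_supp : ∀ n, T g n = 0 → f1 n = 0 := fun n hn => by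
    rw [f1_apply, f2_apply, if_pos hn, sub_self]
  -- T f2 is disjoint from T g
  have h2 : ∀ n, T g n ≠ 0 → T f2 n = 0 := by
    have := hSBP f2 g (by
      ext n
      simp only [Set.mem_inter_iff, Set.mem_setOf_eq, Set.mem_empty_iff_false, iff_false,
        not_and]
      intro hf2n
      by_contra hg
      simp [f2_apply, hg] at hf2n)
    intro n hn
    by_contra hne
    exact absurd (Set.eq_empty_iff_forall_notMem.mp this n) (by simp [hne, hn])
  -- T f1 is disjoint from T f2
  have h4 : ∀ n, T f2 n ≠ 0 → T f1 n = 0 := by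
    have := hSBP f1 f2 (by
      ext n
      simp only [Set.mem_inter_iff, Set.mem_setOf_eq, Set.mem_empty_iff_false, iff_false,
        not_and]
      intro hf1n
      by_contra hf2n
      -- f1 n ≠ 0 forces T g n ≠ 0, and then T f2 n = 0
      have hg : T g n ≠ 0 := fun h => hf1n (f1_supp n h)
      exact hf2n (h2 n hg))
    intro n hn
    by_contra hne
    exact absurd (Set.eq_empty_iff_forall_notMem.mp this n) (by simp [hne, hn])
  -- Key lemma: for k ∈ supp(T g) and n₀ ∈ supp(T f) \ supp(T g), T e_k (n₀) = 0
  have key : ∀ k, T g k ≠ 0 → ∀ n₀, T g n₀ = 0 → T f n₀ ≠ 0 →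
      T (lp.single p k (1 : ℝ)) n₀ = 0 := by
    intro k hk n₀ hgn₀ hfn₀
    have hfk : T f k ≠ 0 := hsub hk
    set lam : ℝ := T g k / T f k with hlam
    have hlamne : lam ≠ 0 := div_ne_zero hk hfk
    set w : lp (fun _ : ℕ => ℝ) p := g - lam • f with hw
    have w_apply : ∀ n, T w n = T g n - lam * T f n := by
      intro n
      rw [hw, map_sub, map_smul]
      have h1 := congrFun (lp.coeFn_sub (T g) (lam • T f)) n
      have h2' := congrFun (lp.coeFn_smul lam (T f)) n
      simp only [Pi.sub_apply, Pi.smul_apply, smul_eq_mul] at h1 h2'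
      rw [h1, h2']
    have hwk : T w k = 0 := by
      rw [w_apply, hlam, div_mul_cancel₀ _ hfk, sub_self]
    have := hSBP (lp.single p k (1 : ℝ)) w (by
      ext n
      simp only [Set.mem_inter_iff, Set.mem_setOf_eq, Set.mem_empty_iff_false, iff_false,
        not_and]
      intro hsn
      have : n = k := by
        by_contra hnk
        exact hsn (lp.single_apply_ne p k _ hnk)
      subst this
      simp [hwk])
    have hwn₀ : T w n₀ ≠ 0 := by
      rw [w_apply, hgn₀, zero_sub, neg_ne_zero]
      exact mul_ne_zero hlamne hfn₀
    by_contra hne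
    exact absurd (Set.eq_empty_iff_forall_notMem.mp this n₀) (by simp [hne, hwn₀])
  -- For n₀ ∈ supp(T f) \ supp(T g): T f1 n₀ = 0
  have keyf1 : ∀ n₀, T g n₀ = 0 → T f n₀ ≠ 0 → T f1 n₀ = 0 := by
    intro n₀ hgn₀ hfn₀
    have hs : HasSum (fun k : ℕ => lp.single p k (f1 k)) f1 := lp.hasSum_single hp f1
    have hs2 : HasSum (fun k : ℕ => lpEvalCLM p n₀ (T (lp.single p k (f1 k))))
        (lpEvalCLM p n₀ (T f1)) := ((lpEvalCLM p n₀).comp T).hasSum hs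
    have hzero : ∀ k : ℕ, lpEvalCLM p n₀ (T (lp.single p k (f1 k))) = 0 := by
      intro k
      have hsingle : lp.single p k (f1 k) = f1 k • (lp.single p k 1 : lp (fun _ : ℕ => ℝ) p) := by
        rw [← lp.single_smul, smul_eq_mul, mul_one]
      rw [hsingle, map_smul, map_smul]
      by_cases hk : T g k = 0
      · rw [f1_supp k hk]; simp
      · rw [smul_eq_mul, lpEvalCLM_apply, key k hk n₀ hgn₀ hfn₀, mul_zero]
    have : HasSum (fun _ : ℕ => (0 : ℝ)) (lpEvalCLM p n₀ (T f1)) := by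
      simpa only [hzero] using hs2
    have := hasSum_zero.unique this
    rw [lpEvalCLM_apply] at this
    exact this.symm
  -- T f = T f1 + T f2 pointwise
  have hTf : ∀ n, T f n = T f1 n + T f2 n := by
    intro n
    have : f = f1 + f2 := by rw [hf1def, sub_add_cancel]
    rw [this, map_add]
    exact congrFun (lp.coeFn_add (T f1) (T f2)) n
  refine ⟨f2, ?_⟩
  ext n
  simp only [Set.mem_setOf_eq, Set.mem_diff]
  constructor
  · intro hn
    have hg : T g n = 0 := by
      by_contra hg
      exact hn (h2 n hg)
    refine ⟨?_, fun hc => hc hg⟩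
    rw [hTf, h4 n hn, zero_add]
    exact hn
  · rintro ⟨hfn, hgn⟩
    have hgn' : T g n = 0 := not_not.mp hgn
    have h1 : T f1 n = 0 := keyf1 n hgn' hfn
    intro hcon
    apply hfn
    rw [hTf, h1, hcon, add_zero]
end

section
/- Let 1 ≤ p < ∞ and let T : ℓ^p → ℓ^p be a continuous linear operator that is semi band preserving. If (f_j)_{j∈ℕ} is a sequence in ℓ^p with supp(T f_{j+1}) ⊆ supp(T f_j) for all j ∈ ℕ, then there exists h ∈ ℓ^p with supp(Th) = ⋂_{j∈ℕ} supp(T f_j). -/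
open scoped ENNReal

/-- The standard unit vector in `ℓ^p`. -/
noncomputable def eV (p : ℝ≥0∞) (i : ℕ) : lp (fun _ : ℕ => ℝ) p :=
  lp.single p i (1 : ℝ)

lemma eV_apply_ne (p : ℝ≥0∞) {i n : ℕ} (h : n ≠ i) : eV p i n = 0 := by
  rw [eV]
  exact lp.single_apply_ne (E := fun _ : ℕ => ℝ) p i (1 : ℝ) h

lemma single_eq_smul_eV (p : ℝ≥0∞) (i : ℕ) (c : ℝ) :
    lp.single p i c = c • eV p i := by
  have := lp.single_smul (E := fun _ : ℕ => ℝ) (𝕜 := ℝ) p i c (1 : ℝ)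
  rw [eV]
  simpa only [smul_eq_mul, mul_one] using this

/-- If `T` is a semi band preserving continuous linear operator on `ℓ^p`
(`1 ≤ p < ∞`) and `(f_j)` is a sequence with decreasing supports of `T f_j`, then
`⋂ j, supp (T f_j)` is the support of some element of the range of `T`. -/
theorem lp_sbp_exists_support_eq_iInter
    (p : ℝ≥0∞) [Fact (1 ≤ p)] (hp : p ≠ ⊤)
    (T : lp (fun _ : ℕ => ℝ) p →L[ℝ] lp (fun _ : ℕ => ℝ) p)
    (hSBP : ∀ f g : lp (fun _ : ℕ => ℝ) p,
      {n : ℕ | f n ≠ 0} ∩ {n : ℕ | T g n ≠ 0} = ∅ →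
      {n : ℕ | T f n ≠ 0} ∩ {n : ℕ | T g n ≠ 0} = ∅)
    (f : ℕ → lp (fun _ : ℕ => ℝ) p)
    (hdec : ∀ j : ℕ, {n : ℕ | T (f (j + 1)) n ≠ 0} ⊆ {n : ℕ | T (f j) n ≠ 0}) :
    ∃ h : lp (fun _ : ℕ => ℝ) p,
      {n : ℕ | T h n ≠ 0} = ⋂ j : ℕ, {n : ℕ | T (f j) n ≠ 0} := by
  classical
  have hp1 : (1 : ℝ≥0∞) ≤ p := Fact.out
  have hp0 : p ≠ 0 := by
    intro h0
    rw [h0] at hp1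
    simp at hp1
  have hpr : 0 < p.toReal := ENNReal.toReal_pos hp0 hp
  -- the standard unit vectors
  set e : ℕ → lp (fun _ : ℕ => ℝ) p := fun i => eV p i with he
  have he_ne : ∀ i n : ℕ, e i n ≠ 0 → n = i := by
    intro i n hn
    by_contra hni
    exact hn (eV_apply_ne p hni)
  -- coordinate evaluation as a continuous linear map
  have evalCLM : ∀ k : ℕ, ∃ φ : lp (fun _ : ℕ => ℝ) p →L[ℝ] ℝ, ∀ x, φ x = x k := by
    intro k
    refine ⟨LinearMap.mkContinuous
      { toFun := fun x : lp (fun _ : ℕ => ℝ) p => x k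
        map_add' := fun x y => rfl
        map_smul' := fun c x => rfl } 1
      (fun x => by
        rw [one_mul]; exact lp.norm_apply_le_norm hp0 x k), fun x => rfl⟩
  -- key expansion: `T x k` is the sum of `x i * T (e i) k`
  have key : ∀ (x : lp (fun _ : ℕ => ℝ) p) (k : ℕ),
      HasSum (fun i : ℕ => x i * T (e i) k) (T x k) := by
    intro x k
    obtain ⟨φ, hφ⟩ := evalCLM k
    have h1 : HasSum (fun i : ℕ => lp.single p i (x i)) x := lp.hasSum_single hp x
    have h2 := (φ.comp T).hasSum h1
    have h3 : ∀ i : ℕ, (φ.comp T) (lp.single p i (x i)) = x i * T (e i) k := by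
      intro i
      have hsingle : lp.single p i (x i) = x i • e i := single_eq_smul_eV p i (x i)
      rw [ContinuousLinearMap.comp_apply, hsingle, map_smul, hφ, lp.coeFn_smul]
      simp [smul_eq_mul]
    have h4 : (φ.comp T) x = T x k := hφ (T x)
    rw [← h4]
    exact HasSum.congr_fun h2 fun i => (h3 i).symm
  -- Lemma F: the key consequence of semi band preservation
  have F : ∀ (g : lp (fun _ : ℕ => ℝ) p) (k i : ℕ),
      T g k ≠ 0 → T (e i) k ≠ 0 → T g i ≠ 0 := by
    intro g k i hk hik
    by_contra hgi
    have hdisj : {n : ℕ | e i n ≠ 0} ∩ {n : ℕ | T g n ≠ 0} = ∅ := by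
      rw [Set.eq_empty_iff_forall_notMem]
      rintro n ⟨hn1, hn2⟩
      rw [he_ne i n hn1] at hn2
      exact hn2 hgi
    have := hSBP (e i) g hdisj
    rw [Set.eq_empty_iff_forall_notMem] at this
    exact this k ⟨hik, hk⟩
  -- the target set and the auxiliary index set
  set S : Set ℕ := ⋂ j : ℕ, {n : ℕ | T (f j) n ≠ 0} with hS
  set U : Set ℕ := {i : ℕ | ∃ k ∈ S, T (e i) k ≠ 0} with hU
  -- the candidate element: restriction of `f 0` to `U`
  set hfun : ℕ → ℝ := fun n => if n ∈ U then f 0 n else 0 with hhfun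
  have hmem : Memℓp hfun p := by
    apply memℓp_gen
    refine Summable.of_nonneg_of_le (fun i => ?_) (fun i => ?_)
      ((lp.memℓp (f 0)).summable hpr)
    · positivity
    · apply Real.rpow_le_rpow (norm_nonneg _) _ hpr.le
      rw [hhfun]
      dsimp only
      split_ifs
      · exact le_rfl
      · simp
  refine ⟨⟨hfun, hmem⟩, ?_⟩
  have hcoe : ∀ n : ℕ, ((⟨hfun, hmem⟩ : lp (fun _ : ℕ => ℝ) p) : ℕ → ℝ) n = hfun n :=
    fun n => rfl
  set h : lp (fun _ : ℕ => ℝ) p := ⟨hfun, hmem⟩ with hh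
  ext k
  simp only [Set.mem_setOf_eq]
  constructor
  · -- if `T h k ≠ 0` then `k ∈ S`
    intro hTk
    by_contra hkS
    rw [hS, Set.mem_iInter] at hkS
    push_neg at hkS
    obtain ⟨j, hj⟩ := hkS
    rw [Set.mem_setOf_eq, not_not] at hj
    -- some term of the expansion of `T h k` is nonzero
    have hterm : ∃ i : ℕ, h i * T (e i) k ≠ 0 := by
      by_contra hall
      push_neg at hall
      have h0 : HasSum (fun i : ℕ => h i * T (e i) k) 0 := by
        simpa [funext hall] using (hasSum_zero : HasSum (fun _ : ℕ => (0 : ℝ)) 0)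
      exact hTk ((key h k).unique h0)
    obtain ⟨i, hi⟩ := hterm
    rw [mul_ne_zero_iff] at hi
    obtain ⟨hi1, hi2⟩ := hi
    -- `i ∈ U`, so there is `k' ∈ S` with `T (e i) k' ≠ 0`
    have hiU : i ∈ U := by
      by_contra hiU
      apply hi1
      rw [hcoe, hhfun]
      simp [hiU]
    obtain ⟨k', hk'S, hk'i⟩ := hiU
    -- `T h i ≠ 0`
    have hThi : T h i ≠ 0 := F h k i hTk hi2
    -- `T (f j) i ≠ 0`
    have hfjk' : T (f j) k' ≠ 0 := by
      rw [hS, Set.mem_iInter] at hk'S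
      exact hk'S j
    have hfji : T (f j) i ≠ 0 := F (f j) k' i hfjk' hk'i
    -- the auxiliary element `g`
    set g : lp (fun _ : ℕ => ℝ) p := (T h i) • f j - (T (f j) i) • h with hg
    have hTg : ∀ n : ℕ, T g n = T h i * T (f j) n - T (f j) i * T h n := by
      intro n
      rw [hg, map_sub, map_smul, map_smul, lp.coeFn_sub, Pi.sub_apply,
        lp.coeFn_smul, lp.coeFn_smul, Pi.smul_apply, Pi.smul_apply,
        smul_eq_mul, smul_eq_mul]
    have hTgi : T g i = 0 := by
      rw [hTg i]
      ring
    have hTgk : T g k = 0 := by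
      by_contra hTgk
      exact (F g k i hTgk hi2) hTgi
    rw [hTg k, hj, mul_zero, zero_sub, neg_eq_zero, mul_eq_zero] at hTgk
    rcases hTgk with h1 | h1
    · exact hfji h1
    · exact hTk h1
  · -- if `k ∈ S` then `T h k ≠ 0`
    intro hkS
    have hterm : ∀ i : ℕ, h i * T (e i) k = f 0 i * T (e i) k := by
      intro i
      by_cases hiU : i ∈ U
      · rw [hcoe, hhfun]
        simp [hiU]
      · have : T (e i) k = 0 := by
          by_contra hne
          exact hiU ⟨k, hkS, hne⟩
        rw [this, mul_zero, mul_zero]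
    have := ((key h k).congr_fun fun i => (hterm i).symm).unique (key (f 0) k)
    rw [this]
    exact Set.mem_iInter.mp hkS 0
end

section
/- Let (Ω, Σ, μ) be a σ-finite measure space, 1 ≤ p < ∞, and let P be a continuous linear operator on X = Lp(Ω, μ; ℝ) with P ∘ P = P and operator norm at most one, which is semi containment preserving: for all f, g ∈ X, if supp f ⊆ supp(Pg) up to a μ-null set then supp(Pf) ⊆ supp(Pg) up to a μ-null set. If (f_j)_{j∈ℕ} is a sequence in X with supp(P f_{j+1}) ⊆ supp(P f_j) up to μ-null sets for all j, then there exists g ∈ X such that supp(Pg) equals ⋂_{j∈ℕ} supp(P f_j), up to a μ-null set. -/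
open MeasureTheory
open scoped ENNReal

/-- Let `P` be a semi containment preserving contractive projection on
`Lp(Ω, μ; ℝ)` (`μ` σ-finite, `1 ≤ p < ∞`). If `(f_j)` is a sequence with a.e.-decreasing
supports of `P f_j`, then `⋂ j, supp (P f_j)` is, up to a `μ`-null set, the support of some
element of the range of `P`. -/
theorem scp_proj_exists_support_eq_iInter
    {Ω : Type*} [MeasurableSpace Ω] (μ : Measure Ω) [SigmaFinite μ]
    (p : ℝ≥0∞) [Fact (1 ≤ p)] (hp : p ≠ ⊤)
    (P : Lp ℝ p μ →L[ℝ] Lp ℝ p μ)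
    (hproj : ∀ f : Lp ℝ p μ, P (P f) = P f) (hnorm : ‖P‖ ≤ 1)
    (hSCP : ∀ f g : Lp ℝ p μ,
      Function.support ⇑f ≤ᵐ[μ] (Function.support ⇑(P g) : Set Ω) →
      Function.support ⇑(P f) ≤ᵐ[μ] (Function.support ⇑(P g) : Set Ω))
    (f : ℕ → Lp ℝ p μ)
    (hdec : ∀ j : ℕ,
      Function.support ⇑(P (f (j + 1))) ≤ᵐ[μ] (Function.support ⇑(P (f j)) : Set Ω)) :
    ∃ g : Lp ℝ p μ,
      Function.support ⇑(P g) =ᵐ[μ]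
        ((⋂ j : ℕ, Function.support ⇑(P (f j)) : Set Ω)) := by
  classical
  set u : Lp ℝ p μ := P (f 0) with hu
  have hPu : P u = u := hproj (f 0)
  have hp0 : p ≠ 0 := (lt_of_lt_of_le zero_lt_one Fact.out).ne'
  set q : ℝ := p.toReal with hqdef
  have hq0 : 0 < q := ENNReal.toReal_pos hp0 hp
  have hmeasj : ∀ j : ℕ, MeasurableSet (Function.support ⇑(P (f j))) := fun j =>
    measurableSet_support (Lp.stronglyMeasurable (P (f j))).measurable
  set S : Set Ω := ⋂ j, Function.support ⇑(P (f j)) with hS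
  have hSmeas : MeasurableSet S := MeasurableSet.iInter hmeasj
  have hmemA : MemLp (S.indicator ⇑u) p μ := (Lp.memLp u).indicator hSmeas
  have hmemB : MemLp (Sᶜ.indicator ⇑u) p μ := (Lp.memLp u).indicator hSmeas.compl
  set a : Lp ℝ p μ := hmemA.toLp _ with ha
  set b : Lp ℝ p μ := hmemB.toLp _ with hb
  have hA : ⇑a =ᵐ[μ] S.indicator ⇑u := hmemA.coeFn_toLp
  have hB : ⇑b =ᵐ[μ] Sᶜ.indicator ⇑u := hmemB.coeFn_toLp
  -- a + b = u
  have hab : a + b = u := by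
    apply Lp.ext
    filter_upwards [hA, hB, Lp.coeFn_add a b] with x h1 h2 h3
    rw [h3]
    simp only [Pi.add_apply, h1, h2]
    exact congrFun (S.indicator_self_add_compl ⇑u) x
  -- support of P a contained a.e. in S
  have hPa_sub : ∀ᵐ x ∂μ, ⇑(P a) x ≠ 0 → x ∈ S := by
    have h1 : ∀ j : ℕ,
        Function.support ⇑(P a) ≤ᵐ[μ] (Function.support ⇑(P (f j)) : Set Ω) := by
      intro j
      refine hSCP a (f j) ?_
      filter_upwards [hA] with x hx
      intro hxs
      have hxS : x ∈ S := by
        by_contra hxS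
        exact hxs (by rw [hx]; exact Set.indicator_of_notMem hxS _)
      exact Set.mem_iInter.mp hxS j
    have h2 : ∀ᵐ x ∂μ, ∀ j : ℕ, x ∈ Function.support ⇑(P a) →
        x ∈ Function.support ⇑(P (f j)) := ae_all_iff.mpr fun j => (h1 j).mono fun x h => h
    filter_upwards [h2] with x hx hne
    exact Set.mem_iInter.mpr fun j => hx j hne
  -- P b = u - P a
  have hPab : P a + P b = u := by rw [← map_add, hab, hPu]
  have hPb : P b = u - P a := eq_sub_of_add_eq' hPab
  have hPa : P a = u - P b := eq_sub_of_add_eq hPab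
  -- norm inequality
  have hnd : ‖P b‖ ≤ ‖b‖ :=
    le_trans (P.le_opNorm b) (mul_le_of_le_one_left (norm_nonneg b) hnorm)
  have he : eLpNorm ⇑(P b) p μ ≤ eLpNorm ⇑b p μ := by
    rw [← ENNReal.toReal_le_toReal (Lp.eLpNorm_lt_top (P b)).ne (Lp.eLpNorm_lt_top b).ne]
    rw [← Lp.norm_def, ← Lp.norm_def]
    exact hnd
  -- lintegral inequality
  have hql : (1 / q) * q = 1 := by field_simp
  have hlint : ∫⁻ x, (‖(P b : Lp ℝ p μ) x‖₊ : ℝ≥0∞) ^ q ∂μ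
      ≤ ∫⁻ x, (‖b x‖₊ : ℝ≥0∞) ^ q ∂μ := by
    have h := ENNReal.rpow_le_rpow he hq0.le
    rw [eLpNorm_eq_lintegral_rpow_enorm_toReal hp0 hp, eLpNorm_eq_lintegral_rpow_enorm_toReal hp0 hp,
      ← ENNReal.rpow_mul, ← ENNReal.rpow_mul, hql, ENNReal.rpow_one, ENNReal.rpow_one] at h
    exact h
  -- a.e. on Sᶜ : P a = 0 and d = b = u
  have hPa0c : ∀ᵐ x ∂μ, x ∉ S → ⇑(P a) x = 0 := by
    filter_upwards [hPa_sub] with x hx hxS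
    by_contra h; exact hxS (hx h)
  have hdbc : ∀ᵐ x ∂μ, x ∉ S → ⇑(P b) x = ⇑b x := by
    have hsub : ⇑(P b) =ᵐ[μ] ⇑u - ⇑(P a) := by
      rw [hPb]; exact Lp.coeFn_sub u (P a)
    filter_upwards [hsub, hPa0c, hB] with x h1 h2 h3 hxS
    rw [h1, Pi.sub_apply, h2 hxS, h3, Set.indicator_of_mem (Set.mem_compl hxS), sub_zero]
  -- b = 0 a.e. on S
  have hbS : ∀ᵐ x ∂μ, x ∈ S → ⇑b x = 0 := by
    filter_upwards [hB] with x h1 hxS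
    rw [h1]; exact Set.indicator_of_notMem (by simpa using hxS) _
  -- measurable integrands
  have hdm : Measurable fun x => (‖(P b : Lp ℝ p μ) x‖₊ : ℝ≥0∞) ^ q :=
    ((Lp.stronglyMeasurable (P b)).measurable.nnnorm.coe_nnreal_ennreal).pow_const q
  have hbm : Measurable fun x => (‖b x‖₊ : ℝ≥0∞) ^ q :=
    ((Lp.stronglyMeasurable b).measurable.nnnorm.coe_nnreal_ennreal).pow_const q
  -- split the integrals
  have hsplitd : ∫⁻ x in S, (‖(P b : Lp ℝ p μ) x‖₊ : ℝ≥0∞) ^ q ∂μ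
        + ∫⁻ x in Sᶜ, (‖(P b : Lp ℝ p μ) x‖₊ : ℝ≥0∞) ^ q ∂μ
      = ∫⁻ x, (‖(P b : Lp ℝ p μ) x‖₊ : ℝ≥0∞) ^ q ∂μ :=
    lintegral_add_compl _ hSmeas
  have hsplitb : ∫⁻ x in S, (‖b x‖₊ : ℝ≥0∞) ^ q ∂μ
        + ∫⁻ x in Sᶜ, (‖b x‖₊ : ℝ≥0∞) ^ q ∂μ
      = ∫⁻ x, (‖b x‖₊ : ℝ≥0∞) ^ q ∂μ :=
    lintegral_add_compl _ hSmeas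
  have hbS0 : ∫⁻ x in S, (‖b x‖₊ : ℝ≥0∞) ^ q ∂μ = 0 := by
    rw [lintegral_eq_zero_iff hbm]
    rw [Filter.EventuallyEq, ae_restrict_iff' hSmeas]
    filter_upwards [hbS] with x hx hxS
    simp [hx hxS, ENNReal.rpow_eq_zero_iff_of_pos hq0]
  have hceq : ∫⁻ x in Sᶜ, (‖(P b : Lp ℝ p μ) x‖₊ : ℝ≥0∞) ^ q ∂μ
      = ∫⁻ x in Sᶜ, (‖b x‖₊ : ℝ≥0∞) ^ q ∂μ := by
    apply lintegral_congr_ae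
    rw [Filter.EventuallyEq, ae_restrict_iff' hSmeas.compl]
    filter_upwards [hdbc] with x hx hxS
    rw [hx hxS]
  have hfin : ∫⁻ x in Sᶜ, (‖b x‖₊ : ℝ≥0∞) ^ q ∂μ ≠ ⊤ := by
    refine ne_top_of_le_ne_top ?_ (le_trans (le_add_self) hsplitb.le)
    have : eLpNorm ⇑b p μ ≠ ⊤ := (Lp.eLpNorm_lt_top b).ne
    rw [eLpNorm_eq_lintegral_rpow_enorm_toReal hp0 hp] at this
    simp only [enorm_eq_nnnorm] at this
    intro hcon
    rw [hcon] at this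
    exact this (by rw [ENNReal.top_rpow_of_pos (by positivity)])
  -- conclude P b = 0 a.e. on S
  have hdS0 : ∫⁻ x in S, (‖(P b : Lp ℝ p μ) x‖₊ : ℝ≥0∞) ^ q ∂μ = 0 := by
    have h1 : ∫⁻ x in S, (‖(P b : Lp ℝ p μ) x‖₊ : ℝ≥0∞) ^ q ∂μ
          + ∫⁻ x in Sᶜ, (‖b x‖₊ : ℝ≥0∞) ^ q ∂μ
        ≤ 0 + ∫⁻ x in Sᶜ, (‖b x‖₊ : ℝ≥0∞) ^ q ∂μ := by
      rw [zero_add, ← hceq]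
      calc _ = ∫⁻ x, (‖(P b : Lp ℝ p μ) x‖₊ : ℝ≥0∞) ^ q ∂μ := hsplitd
        _ ≤ ∫⁻ x, (‖b x‖₊ : ℝ≥0∞) ^ q ∂μ := hlint
        _ = _ := by rw [← hsplitb, hbS0, zero_add, hceq]
    exact le_zero_iff.mp ((ENNReal.add_le_add_iff_right hfin).mp h1)
  have hdzero : ∀ᵐ x ∂μ, x ∈ S → ⇑(P b) x = 0 := by
    rw [lintegral_eq_zero_iff hdm] at hdS0
    rw [Filter.EventuallyEq, ae_restrict_iff' hSmeas] at hdS0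
    filter_upwards [hdS0] with x hx hxS
    have := hx hxS
    simp only [Pi.zero_apply, ENNReal.rpow_eq_zero_iff_of_pos hq0, ENNReal.coe_eq_zero,
      nnnorm_eq_zero] at this
    exact this
  -- finish
  refine ⟨a, ?_⟩
  rw [Filter.eventuallyEq_set]
  have hsubPa : ⇑(P a) =ᵐ[μ] ⇑u - ⇑(P b) := by
    rw [hPa]; exact Lp.coeFn_sub u (P b)
  filter_upwards [hPa_sub, hdzero, hsubPa] with x h1 h2 h3
  constructor
  · intro hx
    exact h1 (by simpa [Function.mem_support] using hx)
  · intro hxS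
    have hux : ⇑u x ≠ 0 := by
      have := Set.mem_iInter.mp hxS 0
      simpa [Function.mem_support, ← hu] using this
    have : ⇑(P a) x = ⇑u x := by rw [h3, Pi.sub_apply, h2 hxS, sub_zero]
    simp [Function.mem_support, this, hux]
end

section
/- For every 1 ≤ p < ∞ there exists a continuous linear operator T on X = Lp([0,1]; ℝ) (with Lebesgue measure) that is semi band preserving but not semi containment preserving; that is, for all f, g ∈ X, supp f ∩ supp(Tg) null implies supp(Tf) ∩ supp(Tg) null, yet there exist f, g ∈ X with supp f ⊆ supp(Tg) up to a null set and supp(Tf) not contained in supp(Tg) up to a null set. -/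
open MeasureTheory
open scoped ENNReal

/-- Lebesgue measure on the unit interval `[0,1]`, as a measure on `ℝ`. -/
noncomputable def μ01 : Measure ℝ := volume.restrict (Set.Icc (0 : ℝ) 1)

namespace SbpAux

lemma μ01_univ : μ01 Set.univ = 1 := by
  show volume.restrict (Set.Icc (0 : ℝ) 1) Set.univ = 1
  rw [Measure.restrict_apply_univ, Real.volume_Icc]
  norm_num

instance : IsFiniteMeasure μ01 := by
  constructor
  rw [μ01_univ]
  exact ENNReal.one_lt_top

lemma μ01_le_volume (s : Set ℝ) : μ01 s ≤ volume s :=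
  Measure.restrict_le_self s

lemma μ01_singleton (a : ℝ) : μ01 {a} = 0 :=
  le_antisymm (by simpa using μ01_le_volume {a}) zero_le

variable (p : ℝ≥0∞) [Fact (1 ≤ p)]

lemma integrable_Lp (f : Lp ℝ p μ01) : Integrable (⇑f) μ01 :=
  (Lp.memLp f).integrable Fact.out

/-- Integral over `s` of an `Lp` function is bounded by the `Lp` norm. -/
lemma norm_setIntegral_le (s : Set ℝ) (f : Lp ℝ p μ01) :
    ‖∫ x in s, f x ∂μ01‖ ≤ ‖f‖ := by
  have hint : Integrable (⇑f) μ01 := integrable_Lp p f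
  have h1 : ‖∫ x in s, f x ∂μ01‖ ≤ ∫ x in s, ‖f x‖ ∂μ01 :=
    norm_integral_le_integral_norm _
  have h2 : ∫ x in s, ‖f x‖ ∂μ01 ≤ ∫ x, ‖f x‖ ∂μ01 :=
    integral_mono_measure Measure.restrict_le_self
      (Filter.Eventually.of_forall fun x => norm_nonneg _) hint.norm
  have h3 : ∫ x, ‖f x‖ ∂μ01 = (eLpNorm (⇑f) 1 μ01).toReal := by
    rw [integral_norm_eq_lintegral_enorm (Lp.aestronglyMeasurable f),
      eLpNorm_one_eq_lintegral_enorm]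
  have h4 : eLpNorm (⇑f) 1 μ01 ≤ eLpNorm (⇑f) p μ01 := by
    have := eLpNorm_le_eLpNorm_mul_rpow_measure_univ (Fact.out : 1 ≤ p)
      (Lp.aestronglyMeasurable f) (μ := μ01)
    rwa [μ01_univ, ENNReal.one_rpow, mul_one] at this
  have h5 : (eLpNorm (⇑f) 1 μ01).toReal ≤ (eLpNorm (⇑f) p μ01).toReal :=
    ENNReal.toReal_mono (Lp.eLpNorm_ne_top f) h4
  rw [Lp.norm_def]
  linarith

/-- The continuous linear functional `f ↦ ∫ x in s, f x ∂μ01` on `Lp`. -/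
noncomputable def sInt (s : Set ℝ) : Lp ℝ p μ01 →L[ℝ] ℝ :=
  LinearMap.mkContinuousOfExistsBound
    { toFun := fun f => ∫ x in s, f x ∂μ01
      map_add' := by
        intro f g
        have h : ⇑(f + g) =ᵐ[μ01.restrict s] ⇑f + ⇑g :=
          ae_restrict_of_ae (Lp.coeFn_add f g)
        show (∫ x in s, (f + g : Lp ℝ p μ01) x ∂μ01) = (∫ x in s, f x ∂μ01) + ∫ x in s, g x ∂μ01
        rw [integral_congr_ae h]
        exact integral_add ((integrable_Lp p f).restrict) ((integrable_Lp p g).restrict)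
      map_smul' := by
        intro c f
        have h : ⇑(c • f) =ᵐ[μ01.restrict s] c • ⇑f :=
          ae_restrict_of_ae (Lp.coeFn_smul c f)
        show (∫ x in s, (c • f : Lp ℝ p μ01) x ∂μ01) = c • ∫ x in s, f x ∂μ01
        rw [integral_congr_ae h]
        simpa using integral_smul c (⇑f) }
    ⟨1, fun f => by simpa using norm_setIntegral_le p s f⟩

@[simp] lemma sInt_apply (s : Set ℝ) (f : Lp ℝ p μ01) :
    sInt p s f = ∫ x in s, f x ∂μ01 := rfl

/-- value of `sInt` on an indicator function. -/
lemma sInt_indicator (s t : Set ℝ) (ht : MeasurableSet t)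
    (h : MemLp (t.indicator (fun _ => (1 : ℝ))) p μ01) :
    sInt p s (h.toLp _) = (μ01 (t ∩ s)).toReal := by
  rw [sInt_apply]
  have h1 : ⇑(h.toLp _) =ᵐ[μ01.restrict s] t.indicator (fun _ => (1 : ℝ)) :=
    ae_restrict_of_ae (MemLp.coeFn_toLp h)
  rw [integral_congr_ae h1, integral_indicator_const (1 : ℝ) ht,
    measureReal_restrict_apply ht]
  simp [measureReal_def]

end SbpAux

/-- For every `1 ≤ p < ∞` there is a continuous linear operator on
`Lp([0,1]; ℝ)` which is semi band preserving but not semi containment preserving. -/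
theorem exists_sbp_not_scp
    (p : ℝ≥0∞) [Fact (1 ≤ p)] (hp : p ≠ ⊤) :
    ∃ T : Lp ℝ p μ01 →L[ℝ] Lp ℝ p μ01,
      (∀ f g : Lp ℝ p μ01,
        μ01 (Function.support ⇑f ∩ Function.support ⇑(T g)) = 0 →
        μ01 (Function.support ⇑(T f) ∩ Function.support ⇑(T g)) = 0) ∧
      ∃ f g : Lp ℝ p μ01,
        Function.support ⇑f ≤ᵐ[μ01] (Function.support ⇑(T g) : Set ℝ) ∧
        ¬ (Function.support ⇑(T f) ≤ᵐ[μ01] (Function.support ⇑(T g) : Set ℝ)) := by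
  classical
  -- the sets
  set A1 : Set ℝ := Set.Ico (0 : ℝ) (1/4) with hA1def
  set A2 : Set ℝ := Set.Ico (1/4 : ℝ) (1/2) with hA2def
  set A : Set ℝ := Set.Ico (0 : ℝ) (1/2) with hAdef
  have hA1m : MeasurableSet A1 := measurableSet_Ico
  have hA2m : MeasurableSet A2 := measurableSet_Ico
  have hA1A : A1 ⊆ A := Set.Ico_subset_Ico le_rfl (by norm_num)
  have hA2A : A2 ⊆ A := Set.Ico_subset_Ico (by norm_num) le_rfl
  -- the functionals
  set φ : Lp ℝ p μ01 →L[ℝ] ℝ := SbpAux.sInt p A1 with hφdef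
  set ψ : Lp ℝ p μ01 →L[ℝ] ℝ := SbpAux.sInt p A2 with hψdef
  -- the vectors U (constant 1) and V (x ↦ min x (1/2))
  have hUmem : MemLp (fun _ : ℝ => (1 : ℝ)) p μ01 := memLp_const 1
  set U : Lp ℝ p μ01 := hUmem.toLp _ with hUdef
  have hVmeas : AEStronglyMeasurable (fun x : ℝ => min x (1/2)) μ01 :=
    (continuous_id.min continuous_const).aestronglyMeasurable
  have hVmem : MemLp (fun x : ℝ => min x (1/2)) p μ01 := by
    apply MemLp.of_bound hVmeas (1/2)
    have hmem : ∀ᵐ x ∂μ01, x ∈ Set.Icc (0 : ℝ) 1 := by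
      show ∀ᵐ x ∂(volume.restrict (Set.Icc (0 : ℝ) 1)), x ∈ Set.Icc (0 : ℝ) 1
      exact ae_restrict_mem measurableSet_Icc
    filter_upwards [hmem] with x hx
    have h1 : (0 : ℝ) ≤ x := (Set.mem_Icc.mp hx).1
    rw [Real.norm_eq_abs, abs_le]
    constructor
    · have h2 : (0 : ℝ) ≤ min x (1/2) := le_min h1 (by norm_num)
      linarith
    · exact min_le_right _ _
  set V : Lp ℝ p μ01 := hVmem.toLp _ with hVdef
  -- the operator
  set T : Lp ℝ p μ01 →L[ℝ] Lp ℝ p μ01 := φ.smulRight U + ψ.smulRight V with hTdef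
  have hTapply : ∀ f, T f = φ f • U + ψ f • V := by
    intro f
    simp [hTdef]
  -- coercion formula for T f
  have hTcoe : ∀ f : Lp ℝ p μ01,
      ⇑(T f) =ᵐ[μ01] fun x => φ f + ψ f * min x (1/2) := by
    intro f
    rw [hTapply f]
    filter_upwards [Lp.coeFn_add (φ f • U) (ψ f • V), Lp.coeFn_smul (φ f) U,
      Lp.coeFn_smul (ψ f) V, MemLp.coeFn_toLp hUmem, MemLp.coeFn_toLp hVmem]
      with x h1 h2 h3 h4 h5
    simp only [h1, Pi.add_apply, h2, h3, Pi.smul_apply, smul_eq_mul]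
    rw [h4, h5]
    ring
  -- if both functionals vanish, T f = 0
  have hTzero : ∀ f : Lp ℝ p μ01, φ f = 0 → ψ f = 0 → T f = 0 := by
    intro f h1 h2
    rw [hTapply f, h1, h2]
    simp
  -- support of the zero element is null
  have hsupp_zero : ∀ h : Lp ℝ p μ01, h = 0 → μ01 (Function.support ⇑h) = 0 := by
    intro h hh
    have h0 : ⇑h =ᵐ[μ01] 0 := by rw [hh]; exact Lp.coeFn_zero _ _ _
    apply measure_eq_zero_iff_ae_notMem.mpr
    filter_upwards [h0] with x hx
    simp only [Function.mem_support, ne_eq, not_not]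
    simpa using hx
  -- if f vanishes a.e. on A then both functionals vanish
  have hvanish : ∀ f : Lp ℝ p μ01, (∀ᵐ x ∂(μ01.restrict A), ⇑f x = 0) →
      φ f = 0 ∧ ψ f = 0 := by
    intro f hf
    constructor
    · rw [hφdef, SbpAux.sInt_apply]
      exact integral_eq_zero_of_ae (ae_restrict_of_ae_restrict_of_subset hA1A hf)
    · rw [hψdef, SbpAux.sInt_apply]
      exact integral_eq_zero_of_ae (ae_restrict_of_ae_restrict_of_subset hA2A hf)
  -- if (φ g, ψ g) ≠ (0,0) then T g is a.e. nonzero on A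
  have hAsupp : ∀ g : Lp ℝ p μ01, ¬(φ g = 0 ∧ ψ g = 0) →
      ∀ᵐ x ∂(μ01.restrict A), ⇑(T g) x ≠ 0 := by
    intro g hg
    have hform : ⇑(T g) =ᵐ[μ01.restrict A] fun x => φ g + ψ g * min x (1/2) :=
      ae_restrict_of_ae (hTcoe g)
    have hnull : (μ01.restrict A) {x | φ g + ψ g * min x (1/2) = 0} = 0 := by
      by_cases hd : ψ g = 0
      · have hc : φ g ≠ 0 := fun hc => hg ⟨hc, hd⟩
        have : {x : ℝ | φ g + ψ g * min x (1/2) = 0} = ∅ := by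
          ext x; simp [hd, hc]
        rw [this]; simp
      · rw [Measure.restrict_apply' measurableSet_Ico]
        refine measure_mono_null ?_ (SbpAux.μ01_singleton ((-(φ g)) / (ψ g)))
        intro x hx
        obtain ⟨hx0, hxA⟩ := hx
        have hxlt : x < 1/2 := (Set.mem_Ico.mp hxA).2
        have hmin : min x (1/2) = x := min_eq_left hxlt.le
        rw [Set.mem_setOf_eq, hmin] at hx0
        have hxval : x = (-(φ g)) / (ψ g) := by
          field_simp
          linarith
        simp [hxval]

    have hae : ∀ᵐ x ∂(μ01.restrict A), x ∉ {x | φ g + ψ g * min x (1/2) = 0} :=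
      measure_eq_zero_iff_ae_notMem.mp hnull
    filter_upwards [hform, hae] with x h1 h2
    rw [h1]
    exact fun h => h2 h
  refine ⟨T, ?_, ?_⟩
  · -- semi band preserving
    intro f g hyp
    by_cases hg : φ g = 0 ∧ ψ g = 0
    · have hz : T g = 0 := hTzero g hg.1 hg.2
      exact measure_mono_null Set.inter_subset_right (hsupp_zero _ hz)
    · -- T g is a.e. nonzero on A; then f vanishes a.e. on A
      have hA0 := hAsupp g hg
      have hf0 : ∀ᵐ x ∂(μ01.restrict A), ⇑f x = 0 := by
        have hae : ∀ᵐ x ∂μ01, x ∉ Function.support ⇑f ∩ Function.support ⇑(T g) :=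
          measure_eq_zero_iff_ae_notMem.mp hyp
        filter_upwards [hA0, ae_restrict_of_ae hae] with x h1 h2
        by_contra hfx
        exact h2 ⟨hfx, h1⟩
      obtain ⟨hφ0, hψ0⟩ := hvanish f hf0
      have hz : T f = 0 := hTzero f hφ0 hψ0
      exact measure_mono_null Set.inter_subset_left (hsupp_zero _ hz)
  · -- not semi containment preserving
    have hmem1 : MemLp (A1.indicator (fun _ => (1 : ℝ))) p μ01 :=
      memLp_indicator_const p hA1m 1 (Or.inr (measure_ne_top _ _))
    have hmem2 : MemLp (A2.indicator (fun _ => (1 : ℝ))) p μ01 :=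
      memLp_indicator_const p hA2m 1 (Or.inr (measure_ne_top _ _))
    set f1 : Lp ℝ p μ01 := hmem1.toLp _ with hf1def
    set f2 : Lp ℝ p μ01 := hmem2.toLp _ with hf2def
    -- measure computations
    have hμA1 : μ01 A1 = ENNReal.ofReal (1/4) := by
      show volume.restrict (Set.Icc (0 : ℝ) 1) A1 = _
      rw [Measure.restrict_apply hA1m]
      have : A1 ∩ Set.Icc (0 : ℝ) 1 = A1 := by
        apply Set.inter_eq_self_of_subset_left
        intro x hx
        obtain ⟨h1, h2⟩ := Set.mem_Ico.mp hx
        exact Set.mem_Icc.mpr ⟨h1, le_trans h2.le (by norm_num)⟩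
      rw [this, Real.volume_Ico]
      norm_num
    have hμA2 : μ01 A2 = ENNReal.ofReal (1/4) := by
      show volume.restrict (Set.Icc (0 : ℝ) 1) A2 = _
      rw [Measure.restrict_apply hA2m]
      have : A2 ∩ Set.Icc (0 : ℝ) 1 = A2 := by
        apply Set.inter_eq_self_of_subset_left
        intro x hx
        obtain ⟨h1, h2⟩ := Set.mem_Ico.mp hx
        exact Set.mem_Icc.mpr ⟨le_trans (by norm_num) h1, le_trans h2.le (by norm_num)⟩
      rw [this, Real.volume_Ico]
      norm_num
    have hA1A2 : A1 ∩ A2 = ∅ := by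
      rw [hA1def, hA2def, Set.Ico_inter_Ico]
      apply Set.Ico_eq_empty
      norm_num
    -- values of the functionals
    have hφf1 : φ f1 = 1/4 := by
      rw [hφdef, SbpAux.sInt_indicator p A1 A1 hA1m hmem1]
      rw [Set.inter_self, hμA1, ENNReal.toReal_ofReal (by norm_num)]
    have hψf1 : ψ f1 = 0 := by
      rw [hψdef, SbpAux.sInt_indicator p A2 A1 hA1m hmem1]
      rw [hA1A2, measure_empty]
      simp
    have hφf2 : φ f2 = 0 := by
      rw [hφdef, SbpAux.sInt_indicator p A1 A2 hA2m hmem2]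
      rw [Set.inter_comm, hA1A2, measure_empty]
      simp
    have hψf2 : ψ f2 = 1/4 := by
      rw [hψdef, SbpAux.sInt_indicator p A2 A2 hA2m hmem2]
      rw [Set.inter_self, hμA2, ENNReal.toReal_ofReal (by norm_num)]
    set g0 : Lp ℝ p μ01 := f1 - (2 : ℝ) • f2 with hg0def
    have hφg0 : φ g0 = 1/4 := by
      rw [hg0def, map_sub, _root_.map_smul]
      rw [hφf1, hφf2]; norm_num
    have hψg0 : ψ g0 = -(1/2) := by
      rw [hg0def, map_sub, _root_.map_smul]
      rw [hψf1, hψf2]; norm_num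
    -- formula for T g0 and T f1
    have hTg0 : ⇑(T g0) =ᵐ[μ01] fun x => 1/4 + (-(1/2)) * min x (1/2) := by
      have := hTcoe g0
      rw [hφg0, hψg0] at this
      exact this
    have hTf1 : ⇑(T f1) =ᵐ[μ01] fun x => (1/4 : ℝ) := by
      have := hTcoe f1
      rw [hφf1, hψf1] at this
      filter_upwards [this] with x hx
      rw [hx]; ring
    refine ⟨f1, g0, ?_, ?_⟩
    · -- supp f1 ≤ᵐ supp (T g0)
      rw [MeasureTheory.ae_le_set]
      apply measure_eq_zero_iff_ae_notMem.mpr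
      filter_upwards [MemLp.coeFn_toLp hmem1, hTg0] with x h1 h2
      intro hx
      obtain ⟨hxs, hxn⟩ := hx
      apply hxn
      have hxA1 : x ∈ A1 := by
        by_contra hxA1
        apply hxs
        show ⇑f1 x = 0
        rw [h1]
        simp [Set.indicator_of_notMem hxA1]
      have hx1 : (0 : ℝ) ≤ x := (Set.mem_Ico.mp hxA1).1
      have hx2 : x < 1/4 := (Set.mem_Ico.mp hxA1).2
      show ⇑(T g0) x ≠ 0
      rw [h2]
      have hmin : min x (1/2) = x := min_eq_left (by linarith)
      rw [hmin]
      intro hcon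
      have : x = 1/2 := by linarith
      linarith
    · -- ¬ supp (T f1) ≤ᵐ supp (T g0)
      rw [MeasureTheory.ae_le_set]
      intro hnull
      have hae : ∀ᵐ x ∂μ01,
          x ∉ Function.support ⇑(T f1) \ Function.support ⇑(T g0) :=
        measure_eq_zero_iff_ae_notMem.mp hnull
      have hbad : ∀ᵐ x ∂μ01, x ∉ Set.Icc (1/2 : ℝ) 1 := by
        filter_upwards [hae, hTf1, hTg0] with x h1 h2 h3
        intro hx
        apply h1
        constructor
        · show ⇑(T f1) x ≠ 0
          rw [h2]; norm_num
        · show ¬ ⇑(T g0) x ≠ 0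
          rw [h3]
          have hmin : min x (1/2) = 1/2 := min_eq_right (Set.mem_Icc.mp hx).1
          rw [hmin]
          norm_num
      have h0 : μ01 (Set.Icc (1/2 : ℝ) 1) = 0 :=
        measure_eq_zero_iff_ae_notMem.mpr hbad
      have h1 : μ01 (Set.Icc (1/2 : ℝ) 1) = ENNReal.ofReal (1/2) := by
        show volume.restrict (Set.Icc (0 : ℝ) 1) (Set.Icc (1/2 : ℝ) 1) = _
        rw [Measure.restrict_apply measurableSet_Icc]
        have : Set.Icc (1/2 : ℝ) 1 ∩ Set.Icc (0 : ℝ) 1 = Set.Icc (1/2 : ℝ) 1 := by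
          apply Set.inter_eq_self_of_subset_left
          intro x hx
          obtain ⟨h1, h2⟩ := Set.mem_Icc.mp hx
          exact Set.mem_Icc.mpr ⟨le_trans (by norm_num) h1, h2⟩
        rw [this, Real.volume_Icc]
        norm_num
      rw [h1] at h0
      simp at h0
end

section
/- Let X be a real Banach lattice containing nonzero elements f₁, f₂ with f₁ ⊥ f₂. Then there exists a continuous linear operator Q : X → X with Q ∘ Q = Q that is semi containment preserving but not semi band preserving. -/
section Aux

variable {X : Type*} [NormedAddCommGroup X] [Lattice X] [HasSolidNorm X]
    [IsOrderedAddMonoid X] [NormedSpace ℝ X] [PosSMulStrictMono ℝ X] [PosSMulReflectLT ℝ X]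

private lemma aux_smul_inf {c : ℝ} (hc : 0 < c) (a b : X) :
    c • (a ⊓ b) = (c • a) ⊓ (c • b) := by
  refine le_antisymm (le_inf (smul_le_smul_of_nonneg_left inf_le_left hc.le)
    (smul_le_smul_of_nonneg_left inf_le_right hc.le)) ?_
  have h : c⁻¹ • ((c • a) ⊓ (c • b)) ≤ a ⊓ b := by
    refine le_inf ?_ ?_
    · have := smul_le_smul_of_nonneg_left (inf_le_left (a := c • a) (b := c • b))
        (inv_nonneg.mpr hc.le)
      rwa [inv_smul_smul₀ hc.ne'] at this
    · have := smul_le_smul_of_nonneg_left (inf_le_right (a := c • a) (b := c • b))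
        (inv_nonneg.mpr hc.le)
      rwa [inv_smul_smul₀ hc.ne'] at this
  have := smul_le_smul_of_nonneg_left h hc.le
  rwa [smul_inv_smul₀ hc.ne'] at this

private lemma aux_smul_sup {c : ℝ} (hc : 0 < c) (a b : X) :
    c • (a ⊔ b) = (c • a) ⊔ (c • b) := by
  refine le_antisymm ?_ (sup_le (smul_le_smul_of_nonneg_left le_sup_left hc.le)
    (smul_le_smul_of_nonneg_left le_sup_right hc.le))
  have h : a ⊔ b ≤ c⁻¹ • ((c • a) ⊔ (c • b)) := by
    refine sup_le ?_ ?_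
    · have := smul_le_smul_of_nonneg_left (le_sup_left (a := c • a) (b := c • b))
        (inv_nonneg.mpr hc.le)
      rwa [inv_smul_smul₀ hc.ne'] at this
    · have := smul_le_smul_of_nonneg_left (le_sup_right (a := c • a) (b := c • b))
        (inv_nonneg.mpr hc.le)
      rwa [inv_smul_smul₀ hc.ne'] at this
  have := smul_le_smul_of_nonneg_left h hc.le
  rwa [smul_inv_smul₀ hc.ne'] at this

private lemma aux_abs_smul (c : ℝ) (x : X) : |c • x| = |c| • |x| := by
  rcases lt_trichotomy c 0 with hc | hc | hc
  · have h : |(-c) • x| = |(-c)| • |x| := by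
      have hc' : 0 < -c := by linarith
      rw [abs_of_pos hc', abs, abs, aux_smul_sup hc', smul_neg, sup_comm]
    rw [show c • x = -((-c) • x) by simp, abs_neg, h, abs_neg]
  · simp [hc]
  · rw [abs_of_pos hc, abs, abs, aux_smul_sup hc, smul_neg]

private lemma aux_disj_smul {a b : X} (ha : 0 ≤ a) (hb : 0 ≤ b)
    (hab : a ⊓ b = 0) (t : ℝ) (ht : 0 ≤ t) : a ⊓ (t • b) = 0 := by
  rcases eq_or_lt_of_le ht with h | h
  · rw [← h, zero_smul]
    exact inf_of_le_right ha
  rcases le_total t 1 with h1 | h1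
  · refine le_antisymm ?_ (le_inf ha (smul_nonneg ht hb))
    calc a ⊓ (t • b) ≤ a ⊓ b := by
          refine inf_le_inf_left a ?_
          calc t • b ≤ (1:ℝ) • b := smul_le_smul_of_nonneg_right h1 hb
          _ = b := one_smul ℝ b
      _ = 0 := hab
  · refine le_antisymm ?_ (le_inf ha (smul_nonneg ht hb))
    calc a ⊓ (t • b) ≤ (t • a) ⊓ (t • b) := by
          refine inf_le_inf_right _ ?_
          calc a = (1:ℝ) • a := (one_smul ℝ a).symm
          _ ≤ t • a := smul_le_smul_of_nonneg_right h1 ha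
      _ = t • (a ⊓ b) := (aux_smul_inf h a b).symm
      _ = 0 := by rw [hab, smul_zero]

private lemma aux_abs_eq_zero {a : X} (h : |a| = 0) : a = 0 := by
  have h1 : a ≤ 0 := (le_sup_left.trans_eq (h : a ⊔ -a = 0))
  have h2 : -a ≤ 0 := (le_sup_right.trans_eq (h : a ⊔ -a = 0))
  exact le_antisymm h1 (by simpa using h2)

end Aux

/-- On any real Banach lattice containing two nonzero disjoint elements there
is a continuous linear projection which is semi containment preserving but not semi band
preserving. -/
theorem exists_scp_proj_not_sbp
    {X : Type*} [NormedAddCommGroup X] [Lattice X] [HasSolidNorm X]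
    [IsOrderedAddMonoid X] [NormedSpace ℝ X]
    [CompleteSpace X] [PosSMulStrictMono ℝ X] [PosSMulReflectLT ℝ X]
    (f₁ f₂ : X) (hf₁ : f₁ ≠ 0) (hf₂ : f₂ ≠ 0) (hdisj : |f₁| ⊓ |f₂| = 0) :
    ∃ Q : X →L[ℝ] X,
      (∀ f : X, Q (Q f) = Q f) ∧
      (∀ f g : X, (∀ h : X, |h| ⊓ |Q g| = 0 → |h| ⊓ |f| = 0) →
        (∀ h : X, |h| ⊓ |Q g| = 0 → |h| ⊓ |Q f| = 0)) ∧
      ¬ (∀ f g : X, |f| ⊓ |Q g| = 0 → |Q f| ⊓ |Q g| = 0) := by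
  -- Construct a functional φ with φ f₁ = 1 and φ f₂ ≠ 0.
  obtain ⟨χ, -, hχ⟩ := exists_dual_vector ℝ f₁ (norm_ne_zero_iff.mpr hf₁)
  obtain ⟨ψ, -, hψ⟩ := exists_dual_vector ℝ f₂ (norm_ne_zero_iff.mpr hf₂)
  have hn1 : ‖f₁‖ ≠ 0 := norm_ne_zero_iff.mpr hf₁
  have hn2 : ‖f₂‖ ≠ 0 := norm_ne_zero_iff.mpr hf₂
  obtain ⟨φ, hφ1, hφ2⟩ : ∃ φ : X →L[ℝ] ℝ, φ f₁ = 1 ∧ φ f₂ ≠ 0 := by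
    by_cases hc2 : χ f₂ ≠ 0
    · exact ⟨‖f₁‖⁻¹ • χ, by simp [hχ, inv_mul_cancel₀ hn1], by
        simp only [ContinuousLinearMap.smul_apply, smul_eq_mul]
        exact mul_ne_zero (inv_ne_zero hn1) hc2⟩
    by_cases hp1 : ψ f₁ ≠ 0
    · exact ⟨(ψ f₁)⁻¹ • ψ, by simp [inv_mul_cancel₀ hp1], by
        simp only [ContinuousLinearMap.smul_apply, smul_eq_mul, hψ]
        exact mul_ne_zero (inv_ne_zero hp1) hn2⟩
    push_neg at hc2 hp1
    exact ⟨‖f₁‖⁻¹ • χ + ‖f₂‖⁻¹ • ψ, by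
        simp [hχ, hp1, inv_mul_cancel₀ hn1], by
        simp [hc2, hψ, inv_mul_cancel₀ hn2]⟩
  refine ⟨φ.smulRight f₁, ?_, ?_, ?_⟩
  · intro f
    simp [ContinuousLinearMap.smulRight_apply, smul_smul, hφ1]
  · intro f g hfg h hh
    -- Q f = φ f • f₁.
    simp only [ContinuousLinearMap.smulRight_apply] at hh ⊢
    rw [aux_abs_smul] at hh ⊢
    by_cases hg : φ g = 0
    · -- Q g = 0; then from hfg with h := f we get f = 0? No: |f| ⊓ |f| = 0, so f = 0.
      have hf0 : f = 0 := by
        have := hfg f (by simp [ContinuousLinearMap.smulRight_apply, hg])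
        have h0 : |f| = 0 := by simpa [inf_idem] using this
        exact aux_abs_eq_zero h0
      simp [hf0]
    · have hgpos : 0 < |φ g| := abs_pos.mpr hg
      have hhf1 : |h| ⊓ |f₁| = 0 := by
        have h' : |h| ⊓ (|φ g|⁻¹ • (|φ g| • |f₁|)) = 0 :=
          aux_disj_smul (abs_nonneg h) (smul_nonneg hgpos.le (abs_nonneg f₁)) hh
            _ (inv_nonneg.mpr hgpos.le)
        rwa [inv_smul_smul₀ hgpos.ne'] at h'
      exact aux_disj_smul (abs_nonneg h) (abs_nonneg f₁) hhf1 _ (abs_nonneg _)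
  · intro hcon
    have := hcon f₂ f₁
    simp only [ContinuousLinearMap.smulRight_apply, hφ1, one_smul] at this
    have key := this (by rw [inf_comm]; exact hdisj)
    rw [aux_abs_smul] at key
    -- |φ f₂| • |f₁| ⊓ |f₁| = 0 but φ f₂ ≠ 0
    have hpos : 0 < |φ f₂| := abs_pos.mpr hφ2
    rcases le_total (|φ f₂|) 1 with h1 | h1
    · have : |φ f₂| • |f₁| ≤ |f₁| := by
        calc |φ f₂| • |f₁| ≤ (1:ℝ) • |f₁| := smul_le_smul_of_nonneg_right h1 (abs_nonneg f₁)
        _ = |f₁| := one_smul ℝ _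
      rw [inf_of_le_left this] at key
      have : f₁ = 0 := by
        have h0 : |f₁| = 0 := by
          have := congrArg (fun x => |φ f₂|⁻¹ • x) key
          simpa [smul_smul, inv_mul_cancel₀ hpos.ne'] using this
        exact aux_abs_eq_zero h0
      exact hf₁ this
    · have : |f₁| ≤ |φ f₂| • |f₁| := by
        calc |f₁| = (1:ℝ) • |f₁| := (one_smul ℝ _).symm
        _ ≤ |φ f₂| • |f₁| := smul_le_smul_of_nonneg_right h1 (abs_nonneg f₁)
      rw [inf_of_le_right this] at key
      exact hf₁ (aux_abs_eq_zero key)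
end

section
/- For every 1 ≤ p < ∞ there exists a continuous linear operator T on X = Lp([0,1]; ℝ) (with Lebesgue measure) such that T ∘ T = T, T is semi band preserving, the range of T is a two-dimensional subspace, and no two nonzero elements of the range of T have almost-everywhere disjoint supports; in particular, T is not a weighted conditional expectation operator. -/
open MeasureTheory
open scoped ENNReal

instance : IsProbabilityMeasure μ01 := ⟨by simp [μ01, Real.volume_Icc]⟩

/-- affine function -/
def aff (a b : ℝ) : ℝ → ℝ := fun x => a + b * x

lemma aff_cont (a b : ℝ) : Continuous (aff a b) := by unfold aff; continuity

lemma aff_bound (a b : ℝ) : ∀ᵐ x ∂μ01, ‖aff a b x‖ ≤ |a| + |b| := by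
  have h : ∀ᵐ x ∂μ01, x ∈ Set.Icc (0:ℝ) 1 := by
    rw [μ01]; exact ae_restrict_mem measurableSet_Icc
  refine h.mono fun x hx => ?_
  have h0 : |x| ≤ 1 := abs_le.2 ⟨by linarith [hx.1], hx.2⟩
  calc ‖aff a b x‖ = |a + b * x| := rfl
    _ ≤ |a| + |b * x| := abs_add_le _ _
    _ = |a| + |b| * |x| := by rw [abs_mul]
    _ ≤ |a| + |b| := by nlinarith [abs_nonneg b]

lemma memLp_aff (p : ℝ≥0∞) (a b : ℝ) : MemLp (aff a b) p μ01 :=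
  MemLp.of_bound ((aff_cont a b).aestronglyMeasurable) (|a| + |b|) (aff_bound a b)

lemma aff_zero_null {a b : ℝ} (h : ¬(a = 0 ∧ b = 0)) : μ01 {x | aff a b x = 0} = 0 := by
  by_cases hb : b = 0
  · have ha : a ≠ 0 := fun h' => h ⟨h', hb⟩
    have : {x : ℝ | aff a b x = 0} = ∅ := by
      ext x; simp [aff, hb, ha]
    simp [this]
  · have : {x : ℝ | aff a b x = 0} ⊆ {-a / b} := by
      intro x hx
      simp only [Set.mem_setOf_eq, aff] at hx
      have : x = -a / b := by field_simp; linarith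
      simp [this]
    refine measure_mono_null this ?_
    refine le_antisymm ?_ (by positivity)
    calc μ01 {-a/b} ≤ volume {(-a/b : ℝ)} := by
          rw [μ01]; exact Measure.restrict_le_self _
      _ = 0 := Real.volume_singleton

lemma supp_compl_aff {a b : ℝ} (h : ¬(a = 0 ∧ b = 0)) :
    μ01 (Function.support (aff a b))ᶜ = 0 := by
  have : (Function.support (aff a b))ᶜ = {x | aff a b x = 0} := by
    ext x; simp [Function.mem_support]
  rw [this]; exact aff_zero_null h

lemma ne_ae_null {f g : ℝ → ℝ} (h : f =ᵐ[μ01] g) : μ01 {x | f x ≠ g x} = 0 :=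
  ae_iff.mp h

lemma supp_compl_null {w : ℝ → ℝ} {a b : ℝ} (hw : w =ᵐ[μ01] aff a b)
    (h : ¬(a = 0 ∧ b = 0)) : μ01 (Function.support w)ᶜ = 0 := by
  refine measure_mono_null (fun x hx => ?_)
    (measure_union_null (ne_ae_null hw) (supp_compl_aff h))
  by_cases hfg : w x = aff a b x
  · right
    simp only [Set.mem_compl_iff, Function.mem_support, not_not] at hx ⊢
    rw [← hfg]; exact hx
  · exact Or.inl hfg

lemma supp_null_of_ae_zero {w : ℝ → ℝ} (hw : w =ᵐ[μ01] 0) :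
    μ01 (Function.support w) = 0 := by
  refine measure_mono_null (fun x hx => ?_) (ne_ae_null hw)
  simpa [Function.mem_support] using hx

lemma ae_aff_ne_zero {w : ℝ → ℝ} {a b : ℝ} (hw : w =ᵐ[μ01] aff a b)
    (h : ¬(a = 0 ∧ b = 0)) : ¬ (w =ᵐ[μ01] 0) := by
  intro h0
  have h1 := supp_compl_null hw h
  have h2 := supp_null_of_ae_zero h0
  have : μ01 (Set.univ : Set ℝ) = 0 := by
    have hsub : (Set.univ : Set ℝ) ⊆ Function.support w ∪ (Function.support w)ᶜ :=
      fun x _ => (em _).imp id id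
    exact measure_mono_null hsub (measure_union_null h2 h1)
  simp at this

/-- transfer null intersection along a.e. equality in the first component -/
lemma null_inter_congr {f g : ℝ → ℝ} (h : f =ᵐ[μ01] g) (S : Set ℝ)
    (h0 : μ01 (Function.support f ∩ S) = 0) :
    μ01 (Function.support g ∩ S) = 0 := by
  refine measure_mono_null (fun x hx => ?_)
    (measure_union_null (ne_ae_null h) h0)
  by_cases hfg : f x = g x
  · exact Or.inr ⟨by simp only [Function.mem_support, hfg]; exact hx.1, hx.2⟩
  · exact Or.inl hfg

section Op
variable (p : ℝ≥0∞) [Fact (1 ≤ p)]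

lemma integrable_aff_mul (a b : ℝ) (f : Lp ℝ p μ01) :
    Integrable (fun x => aff a b x * f x) μ01 :=
  ((Lp.memLp f).integrable Fact.out).bdd_mul (aff_cont a b).aestronglyMeasurable
    (aff_bound a b)

lemma integral_norm_le (f : Lp ℝ p μ01) : ∫ x, ‖f x‖ ∂μ01 ≤ ‖f‖ := by
  rw [integral_norm_eq_lintegral_enorm (Lp.aestronglyMeasurable f), Lp.norm_def,
    ← eLpNorm_one_eq_lintegral_enorm]
  exact ENNReal.toReal_mono (Lp.eLpNorm_ne_top f)
    (eLpNorm_le_eLpNorm_of_exponent_le Fact.out (Lp.aestronglyMeasurable f))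

/-- pairing with an affine weight, as a continuous linear functional on Lp -/
noncomputable def pairL (a b : ℝ) : Lp ℝ p μ01 →L[ℝ] ℝ :=
  LinearMap.mkContinuous
    { toFun := fun f => ∫ x, aff a b x * f x ∂μ01
      map_add' := fun f g => by
        have h1 := integrable_aff_mul p a b f
        have h2 := integrable_aff_mul p a b g
        rw [← integral_add h1 h2]
        refine integral_congr_ae ?_
        filter_upwards [Lp.coeFn_add f g] with x hx
        rw [hx]; simp [mul_add]
      map_smul' := fun c f => by
        rw [RingHom.id_apply, ← integral_smul]
        refine integral_congr_ae ?_
        filter_upwards [Lp.coeFn_smul c f] with x hx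
        rw [hx]; simp [smul_eq_mul]; ring }
    (|a| + |b|)
    (fun f => by
      simp only [LinearMap.coe_mk, AddHom.coe_mk]
      calc ‖∫ x, aff a b x * f x ∂μ01‖ ≤ ∫ x, ‖aff a b x * f x‖ ∂μ01 :=
            norm_integral_le_integral_norm _
        _ ≤ ∫ x, (|a| + |b|) * ‖f x‖ ∂μ01 := by
            refine integral_mono_ae ((integrable_aff_mul p a b f).norm) ?_ ?_
            · exact ((Lp.memLp f).integrable Fact.out).norm.const_mul _
            · filter_upwards [aff_bound a b] with x hx
              rw [norm_mul]
              exact mul_le_mul_of_nonneg_right hx (norm_nonneg _)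
        _ = (|a| + |b|) * ∫ x, ‖f x‖ ∂μ01 := integral_const_mul _ _
        _ ≤ (|a| + |b|) * ‖f‖ :=
            mul_le_mul_of_nonneg_left (integral_norm_le p f) (by positivity))

lemma pairL_apply (a b : ℝ) (f : Lp ℝ p μ01) :
    pairL p a b f = ∫ x, aff a b x * f x ∂μ01 := rfl

/-- affine functions as elements of Lp -/
noncomputable def eA (a b : ℝ) : Lp ℝ p μ01 := (memLp_aff p a b).toLp _

lemma eA_coe (a b : ℝ) : ⇑(eA p a b) =ᵐ[μ01] aff a b := MemLp.coeFn_toLp _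

lemma integral_mu01 (g : ℝ → ℝ) : ∫ x, g x ∂μ01 = ∫ x in (0:ℝ)..1, g x := by
  rw [μ01, intervalIntegral.integral_of_le zero_le_one, ← integral_Icc_eq_integral_Ioc]

lemma pair_eA (a b c d : ℝ) :
    pairL p a b (eA p c d) = a*c + (a*d + b*c)/2 + b*d/3 := by
  rw [pairL_apply]
  have h1 : ∫ x, aff a b x * (eA p c d) x ∂μ01 = ∫ x, aff a b x * aff c d x ∂μ01 :=
    integral_congr_ae (by filter_upwards [eA_coe p c d] with x hx; rw [hx])
  have h2 : ∀ x : ℝ, aff a b x * aff c d x = a*c + (a*d+b*c)*x + (b*d)*x^2 :=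
    fun x => by simp only [aff]; ring
  rw [h1, integral_mu01]
  simp_rw [h2]
  rw [intervalIntegral.integral_add, intervalIntegral.integral_add,
    intervalIntegral.integral_const_mul, intervalIntegral.integral_const_mul]
  · simp [integral_id, integral_pow]
    ring
  all_goals
    apply Continuous.intervalIntegrable; continuity

/-- the rank-two projection -/
noncomputable def Tproj : Lp ℝ p μ01 →L[ℝ] Lp ℝ p μ01 :=
  (pairL p 4 (-6)).smulRight (eA p 1 0) + (pairL p (-6) 12).smulRight (eA p 0 1)

lemma Tproj_apply (f : Lp ℝ p μ01) :
    Tproj p f = pairL p 4 (-6) f • eA p 1 0 + pairL p (-6) 12 f • eA p 0 1 := rfl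

lemma comb_coe (a b : ℝ) :
    ⇑(a • eA p 1 0 + b • eA p 0 1) =ᵐ[μ01] aff a b := by
  filter_upwards [Lp.coeFn_add (a • eA p 1 0) (b • eA p 0 1),
    Lp.coeFn_smul a (eA p 1 0), Lp.coeFn_smul b (eA p 0 1),
    eA_coe p 1 0, eA_coe p 0 1] with x h1 h2 h3 h4 h5
  rw [h1]
  simp only [Pi.add_apply]
  rw [h2, h3]
  simp only [Pi.smul_apply, smul_eq_mul]
  rw [h4, h5]
  simp [aff]

lemma comb_ne_zero (a b : ℝ) (h : ¬(a = 0 ∧ b = 0)) :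
    a • eA p 1 0 + b • eA p 0 1 ≠ 0 := by
  intro h0
  refine ae_aff_ne_zero (comb_coe p a b) h ?_
  rw [h0]
  exact Lp.coeFn_zero ℝ p μ01

lemma eA_ne_zero (a b : ℝ) (h : ¬(a = 0 ∧ b = 0)) : eA p a b ≠ 0 := by
  intro h0
  refine ae_aff_ne_zero (eA_coe p a b) h ?_
  rw [h0]
  exact Lp.coeFn_zero ℝ p μ01

lemma Tproj_e1 : Tproj p (eA p 1 0) = eA p 1 0 := by
  rw [Tproj_apply, pair_eA p 4 (-6) 1 0, pair_eA p (-6) 12 1 0]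
  norm_num

lemma Tproj_e2 : Tproj p (eA p 0 1) = eA p 0 1 := by
  rw [Tproj_apply, pair_eA p 4 (-6) 0 1, pair_eA p (-6) 12 0 1]
  norm_num

lemma Tproj_zero_of_ae_zero (f : Lp ℝ p μ01) (hf : ⇑f =ᵐ[μ01] 0) : Tproj p f = 0 := by
  have hz : ∀ a b : ℝ, pairL p a b f = 0 := by
    intro a b
    rw [pairL_apply]
    have : ∫ x, aff a b x * f x ∂μ01 = ∫ (_ : ℝ), (0:ℝ) ∂μ01 :=
      integral_congr_ae (by filter_upwards [hf] with x hx; simp [hx])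
    rw [this, integral_zero]
  rw [Tproj_apply, hz, hz]
  simp

end Op

set_option maxHeartbeats 1000000 in
/-- For every `1 ≤ p < ∞` there is a continuous linear projection on
`Lp([0,1]; ℝ)` which is semi band preserving, has two-dimensional range, and is such that no
two nonzero elements of its range have a.e. disjoint supports; in particular it is not a
weighted conditional expectation operator. -/
theorem exists_sbp_proj_not_weightedCondExp
    (p : ℝ≥0∞) [Fact (1 ≤ p)] (hp : p ≠ ⊤) :
    ∃ T : Lp ℝ p μ01 →L[ℝ] Lp ℝ p μ01,
      (∀ f : Lp ℝ p μ01, T (T f) = T f) ∧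
      (∀ f g : Lp ℝ p μ01,
        μ01 (Function.support ⇑f ∩ Function.support ⇑(T g)) = 0 →
        μ01 (Function.support ⇑(T f) ∩ Function.support ⇑(T g)) = 0) ∧
      Module.finrank ℝ (LinearMap.range (T : Lp ℝ p μ01 →ₗ[ℝ] Lp ℝ p μ01)) = 2 ∧
      (∀ x y : Lp ℝ p μ01, x ∈ Set.range T → y ∈ Set.range T → x ≠ 0 → y ≠ 0 →
        μ01 (Function.support ⇑x ∩ Function.support ⇑y) ≠ 0) ∧
      ¬ ∃ (J : Type) (u : J → Lp ℝ p μ01) (ψ : J → Lp ℝ p μ01 →L[ℝ] ℝ),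
          (∀ j, u j ≠ 0) ∧
          (Pairwise fun i j =>
            μ01 (Function.support ⇑(u i) ∩ Function.support ⇑(u j)) = 0) ∧
          (∀ j, ∀ f : Lp ℝ p μ01,
            μ01 (Function.support ⇑f ∩ Function.support ⇑(u j)) = 0 → ψ j f = 0) ∧
          (∀ f : Lp ℝ p μ01, HasSum (fun j => ψ j f • u j) (T f)) := by
  classical
  -- abbreviations
  set e1 : Lp ℝ p μ01 := eA p 1 0 with he1def
  set e2 : Lp ℝ p μ01 := eA p 0 1 with he2def
  have he1ne : e1 ≠ 0 := eA_ne_zero p 1 0 (by norm_num)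
  have he2ne : e2 ≠ 0 := eA_ne_zero p 0 1 (by norm_num)
  have hTe1 : Tproj p e1 = e1 := Tproj_e1 p
  have hTe2 : Tproj p e2 = e2 := Tproj_e2 p
  -- idempotence
  have hTT : ∀ f, Tproj p (Tproj p f) = Tproj p f := by
    intro f
    rw [Tproj_apply p f, map_add, _root_.map_smul, _root_.map_smul, hTe1, hTe2]
  -- a.e. representation of Tproj p f
  have hcoe : ∀ f : Lp ℝ p μ01,
      ⇑(Tproj p f) =ᵐ[μ01] aff (pairL p 4 (-6) f) (pairL p (-6) 12 f) := by
    intro f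
    rw [Tproj_apply p f]
    exact comb_coe p _ _
  -- zero criterion
  have hzero : ∀ f : Lp ℝ p μ01,
      (pairL p 4 (-6) f = 0 ∧ pairL p (-6) 12 f = 0) → Tproj p f = 0 := by
    intro f ⟨h1, h2⟩
    rw [Tproj_apply p f, h1, h2]
    simp
  -- co-null support of nonzero images
  have hconull : ∀ f : Lp ℝ p μ01, Tproj p f ≠ 0 →
      μ01 (Function.support ⇑(Tproj p f))ᶜ = 0 := by
    intro f hf
    refine supp_compl_null (hcoe f) fun hab => hf (hzero f hab)
  -- null support of images of a.e.-zero functions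
  have hsuppz : ∀ w : Lp ℝ p μ01, w = 0 → μ01 (Function.support ⇑w) = 0 := by
    intro w hw
    refine supp_null_of_ae_zero ?_
    rw [hw]
    exact Lp.coeFn_zero ℝ p μ01
  -- semi band preserving
  have hsbp : ∀ f g : Lp ℝ p μ01,
      μ01 (Function.support ⇑f ∩ Function.support ⇑(Tproj p g)) = 0 →
      μ01 (Function.support ⇑(Tproj p f) ∩ Function.support ⇑(Tproj p g)) = 0 := by
    intro f g h
    by_cases hg : Tproj p g = 0
    · exact measure_mono_null Set.inter_subset_right (hsuppz _ hg)
    · have hgc := hconull g hg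
      have hfnull : μ01 (Function.support ⇑f) = 0 := by
        refine measure_mono_null (fun x hx => ?_) (measure_union_null h hgc)
        by_cases hxg : x ∈ Function.support ⇑(Tproj p g)
        · exact Or.inl ⟨hx, hxg⟩
        · exact Or.inr hxg
      have hfz : ⇑f =ᵐ[μ01] 0 := by
        have : ∀ᵐ x ∂μ01, ¬ (x ∈ Function.support ⇑f) := ae_iff.mpr (by simp only [not_not, Set.setOf_mem_eq]; exact hfnull)
        filter_upwards [this] with x hx
        simpa [Function.mem_support] using hx
      rw [Tproj_zero_of_ae_zero p f hfz]
      refine measure_mono_null Set.inter_subset_left (hsuppz _ rfl)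
  -- linear independence of e1, e2
  have hli : ∀ s t : ℝ, s • e1 + t • e2 = 0 → s = 0 ∧ t = 0 := by
    intro s t hst
    by_contra hc
    exact comb_ne_zero p s t (fun h => hc h) hst
  -- no two nonzero elements of the range have a.e. disjoint supports
  have h4 : ∀ x y : Lp ℝ p μ01, x ∈ Set.range (Tproj p) → y ∈ Set.range (Tproj p) →
      x ≠ 0 → y ≠ 0 →
      μ01 (Function.support ⇑x ∩ Function.support ⇑y) ≠ 0 := by
    rintro x y ⟨f, rfl⟩ ⟨g, rfl⟩ hx0 hy0 hnull
    have hxc := hconull f hx0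
    have hyc := hconull g hy0
    have : μ01 (Set.univ : Set ℝ) = 0 := by
      refine measure_mono_null (fun z _ => ?_)
        (measure_union_null hnull (measure_union_null hxc hyc))
      by_cases hzx : z ∈ Function.support ⇑(Tproj p f)
      · by_cases hzy : z ∈ Function.support ⇑(Tproj p g)
        · exact Or.inl ⟨hzx, hzy⟩
        · exact Or.inr (Or.inr hzy)
      · exact Or.inr (Or.inl hzx)
    simp at this
  -- rank
  have hrank :
      Module.finrank ℝ (LinearMap.range ((Tproj p) : Lp ℝ p μ01 →ₗ[ℝ] Lp ℝ p μ01)) = 2 := by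
    have hr : LinearMap.range ((Tproj p) : Lp ℝ p μ01 →ₗ[ℝ] Lp ℝ p μ01)
        = Submodule.span ℝ (Set.range ![e1, e2]) := by
      have hrange : Set.range ![e1, e2] = {e1, e2} := by
        ext z
        constructor
        · rintro ⟨i, rfl⟩
          fin_cases i <;> simp
        · rintro (rfl | rfl)
          · exact ⟨0, rfl⟩
          · exact ⟨1, rfl⟩
      rw [hrange]
      apply le_antisymm
      · rintro x ⟨f, rfl⟩
        show Tproj p f ∈ _
        rw [Tproj_apply p f]
        exact Submodule.add_mem _
          (Submodule.smul_mem _ _ (Submodule.subset_span (by simp [he1def, he2def])))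
          (Submodule.smul_mem _ _ (Submodule.subset_span (by simp [he1def, he2def])))
      · rw [Submodule.span_le]
        rintro z (rfl | rfl)
        · exact ⟨e1, hTe1⟩
        · exact ⟨e2, hTe2⟩
    rw [hr]
    have hlin : LinearIndependent ℝ ![e1, e2] := LinearIndependent.pair_iff.mpr hli
    rw [finrank_span_eq_card hlin]
    simp
  refine ⟨Tproj p, hTT, hsbp, hrank, h4, ?_⟩
  -- not a weighted conditional expectation operator
  rintro ⟨J, u, ψ, hu, hdisj, hvan, hsum⟩
  -- ψ k (u m) = 0 for m ≠ k
  have hψu : ∀ k m : J, m ≠ k → ψ k (u m) = 0 := fun k m hmk =>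
    hvan k (u m) (hdisj hmk)
  -- diagonal action
  have hA : ∀ (k : J) (f : Lp ℝ p μ01), ψ k (Tproj p f) = ψ k (u k) * ψ k f := by
    intro k f
    have h1 := (ψ k).hasSum (hsum f)
    have h2 : ∀ m : J, m ≠ k → ψ k (ψ m f • u m) = 0 := by
      intro m hm
      rw [_root_.map_smul, hψu k m hm]
      simp
    have h3 := hasSum_single (f := fun m => ψ k (ψ m f • u m)) k h2
    have h4' := h1.unique h3
    rw [h4']
    simp only [_root_.map_smul, smul_eq_mul]
    ring
  -- T (u k) = (ψ k (u k)) • u k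
  have hTu : ∀ k : J, Tproj p (u k) = ψ k (u k) • u k := by
    intro k
    have h1 := hsum (u k)
    have h2 : ∀ m : J, m ≠ k → ψ m (u k) • u m = 0 := by
      intro m hm
      rw [hvan m (u k) (hdisj hm.symm)]
      simp
    exact h1.unique (hasSum_single (f := fun m => ψ m (u k) • u m) k h2)
  -- the coefficients satisfy c (c - 1) = 0 where they matter
  have hc01 : ∀ (k : J) (f : Lp ℝ p μ01), ψ k f ≠ 0 →
      ψ k (u k) = 0 ∨ ψ k (u k) = 1 := by
    intro k f hf
    have hB := hA k (Tproj p f)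
    rw [hTT f, hA k f] at hB
    -- hB : ψ k (u k) * ψ k f = ψ k (u k) * (ψ k (u k) * ψ k f)
    have : ψ k (u k) * (ψ k (u k) - 1) * ψ k f = 0 := by ring_nf; nlinarith [hB]
    rcases mul_eq_zero.mp this with h | h
    · rcases mul_eq_zero.mp h with h | h
      · exact Or.inl h
      · exact Or.inr (by linarith)
    · exact absurd h hf
  -- the sum representation of T f with diagonal-corrected coefficients
  have hmain : ∀ f : Lp ℝ p μ01,
      HasSum (fun k => (ψ k (u k) * ψ k f) • u k) (Tproj p f) := by
    intro f
    have h1 := hsum (Tproj p f)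
    rw [hTT f] at h1
    have heq : (fun k => ψ k (Tproj p f) • u k) = fun k => (ψ k (u k) * ψ k f) • u k :=
      funext fun k => by rw [hA k f]
    rwa [heq] at h1
  rcases Classical.em (∃ k l : J, k ≠ l ∧ ψ k (u k) = 1 ∧ ψ l (u l) = 1) with H | H
  · obtain ⟨k, l, hkl, hck, hcl⟩ := H
    have hk : u k ∈ Set.range (Tproj p) := ⟨u k, by rw [hTu k, hck, one_smul]⟩
    have hl : u l ∈ Set.range (Tproj p) := ⟨u l, by rw [hTu l, hcl, one_smul]⟩
    exact h4 (u k) (u l) hk hl (hu k) (hu l) (hdisj hkl)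
  · push_neg at H
    have hterm : ∀ (f : Lp ℝ p μ01) (k : J),
        (ψ k (u k) * ψ k f) • u k ≠ 0 → ψ k (u k) = 1 := by
      intro f k h
      have hψf : ψ k f ≠ 0 := fun h0 => h (by rw [h0]; simp)
      have hck : ψ k (u k) ≠ 0 := fun h0 => h (by rw [h0]; simp)
      rcases hc01 k f hψf with h0 | h1
      · exact absurd h0 hck
      · exact h1
    rcases Classical.em (∃ k : J, ψ k (u k) = 1) with HK | HK
    · obtain ⟨k0, hk0⟩ := HK
      have hTf : ∀ f : Lp ℝ p μ01, Tproj p f = ψ k0 f • u k0 := by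
        intro f
        have h2 : ∀ m : J, m ≠ k0 → (ψ m (u m) * ψ m f) • u m = 0 := by
          intro m hm
          by_contra hne
          exact H m k0 hm (hterm f m hne) hk0
        have := (hmain f).unique
          (hasSum_single (f := fun k => (ψ k (u k) * ψ k f) • u k) k0 h2)
        simpa [hk0] using this
      have he1u := hTf e1
      rw [hTe1] at he1u
      have he2u := hTf e2
      rw [hTe2] at he2u
      set α := ψ k0 e1 with hαdef
      set β := ψ k0 e2 with hβdef
      have hα : α ≠ 0 := by
        intro h0
        rw [h0, zero_smul] at he1u
        exact he1ne he1u
      have hcomb : β • e1 + (-α) • e2 = 0 := by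
        rw [he1u, he2u, smul_smul, smul_smul, ← add_smul]
        have hz : β * α + (-α) * β = 0 := by ring
        rw [hz, zero_smul]
      have := (hli _ _ hcomb).2
      exact hα (by linarith)
    · push_neg at HK
      have hTf : ∀ f : Lp ℝ p μ01, Tproj p f = 0 := by
        intro f
        have hzf : (fun k => (ψ k (u k) * ψ k f) • u k) = fun _ => (0 : Lp ℝ p μ01) := by
          funext k
          by_contra hne
          exact HK k (hterm f k hne)
        have h0 : HasSum (fun k => (ψ k (u k) * ψ k f) • u k) 0 := by
          rw [hzf]; exact hasSum_zero
        exact (hmain f).unique h0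
      exact he1ne (by rw [← hTe1, hTf e1])
end
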